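/- Fix u₁, u₂ ∈ ℝⁿ and let 0 ≤ k, ℓ < n, β > 0 with k + ℓ + β ≥ n and k + ℓ ≠ n. Then ∫_{ℝⁿ} ⟨z⟩^{-β-ε} / (|z − u₁|^k |z − u₂|^ℓ) dz ≤ C (1/|u₁ − u₂|)^{max(0, k+ℓ−n)} if |u₁ − u₂| ≤ 1, and ≤ C (1/|u₁ − u₂|)^{min(k, ℓ, k+ℓ+β−n)} if |u₁ − u₂| > 1, for any ε > 0, with C independent of u₁, u₂. -/

import Mathlib

open MeasureTheory Real Metric Set ENNReal

variable {n : ℕ}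

local notation "Eu" => EuclideanSpace ℝ (Fin n)

lemma eu_nontrivial (hn : 0 < n) : Nontrivial (EuclideanSpace ℝ (Fin n)) := by
  haveI : Nonempty (Fin n) := ⟨⟨0, hn⟩⟩
  exact inferInstanceAs (Nontrivial (PiLp 2 fun _ : Fin n => ℝ))

lemma lintegral_ball_rpow0 (hn : 0 < n) {p : ℝ} (hp0 : 0 ≤ p) (hpn : p < n) :
    ∃ K : ℝ≥0∞, K ≠ ∞ ∧ ∀ r : ℝ, 0 < r →
      ∫⁻ z : Eu in ball 0 r, ENNReal.ofReal (‖z‖ ^ (-p)) ≤ K * ENNReal.ofReal (r ^ (n - p)) := by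
  haveI := eu_nontrivial hn
  classical
  set μB : ℝ≥0∞ := volume (ball (0 : Eu) 1) with hμB
  have hμBfin : μB ≠ ∞ := measure_ball_lt_top.ne
  set q : ℝ := (2:ℝ)⁻¹ ^ (n - p) with hq
  have hq0 : 0 < q := by positivity
  have hq1 : q < 1 := by
    apply Real.rpow_lt_one (by norm_num) (by norm_num)
    linarith
  refine ⟨ENNReal.ofReal (2 ^ p) * μB * (1 - ENNReal.ofReal q)⁻¹, ?_, ?_⟩
  · apply ENNReal.mul_ne_top (ENNReal.mul_ne_top ofReal_ne_top hμBfin)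
    rw [ENNReal.inv_ne_top]
    simp [tsub_eq_zero_iff_le, ENNReal.one_le_ofReal, not_le, hq1]
  intro r hr
  set c : ℝ := (2:ℝ)⁻¹ with hc
  have hc0 : 0 < c := by norm_num
  have hc1 : c < 1 := by norm_num
  set A : ℕ → Set (EuclideanSpace ℝ (Fin n)) :=
    fun j => ball 0 (r * c ^ j) \ ball 0 (r * c ^ (j + 1)) with hA
  have cover : ball (0 : Eu) r ⊆ {0} ∪ ⋃ j : ℕ, A j := by
    intro z hz
    rw [mem_ball, dist_zero_right] at hz
    rcases eq_or_ne z 0 with h0 | h0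
    · exact Or.inl h0
    right
    have hz0 : 0 < ‖z‖ := norm_pos_iff.mpr h0
    have hex : ∃ j : ℕ, r * c ^ (j + 1) ≤ ‖z‖ := by
      obtain ⟨j, hj⟩ := exists_pow_lt_of_lt_one (x := ‖z‖ / r) (y := c) (by positivity) hc1
      refine ⟨j, ?_⟩
      rw [lt_div_iff₀ hr] at hj
      nlinarith [pow_pos hc0 j, pow_pos hc0 (j+1), pow_succ c j]
    set j := Nat.find hex with hjdef
    have hjle : r * c ^ (j + 1) ≤ ‖z‖ := Nat.find_spec hex
    have hup : ‖z‖ < r * c ^ j := by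
      rcases j.eq_zero_or_pos with h | h
      · simpa [h] using hz
      · have := Nat.find_min hex (m := j - 1) (by omega)
        push_neg at this
        rwa [Nat.sub_add_cancel h] at this
    refine mem_iUnion.mpr ⟨j, ?_, ?_⟩
    · rw [mem_ball, dist_zero_right]; exact hup
    · rw [mem_ball, dist_zero_right]; exact not_lt.mpr hjle
  have hrc : ∀ j : ℕ, (r * c ^ (j+1)) ^ (-p) * (r * c ^ j) ^ (n:ℕ) = 2 ^ p * r ^ ((n:ℝ) - p) * q ^ j := by
    intro j
    have h2 : (2:ℝ) ^ p = c ^ (-p) := by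
      rw [hc, Real.inv_rpow (by norm_num), Real.rpow_neg (by norm_num), inv_inv]
    rw [Real.mul_rpow hr.le (by positivity), ← Real.rpow_natCast c (j+1),
      ← Real.rpow_natCast (r * c ^ j) n, Real.mul_rpow hr.le (by positivity),
      ← Real.rpow_natCast c j, ← Real.rpow_mul hc0.le, ← Real.rpow_mul hc0.le, hq,
      ← Real.rpow_natCast (c ^ ((n:ℝ) - p)) j, ← Real.rpow_mul hc0.le, h2]
    push_cast
    have L : r ^ (-p) * c ^ (((j:ℝ)+1) * -p) * (r ^ (n:ℝ) * c ^ ((j:ℝ) * (n:ℝ)))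
        = (r ^ (-p) * r ^ (n:ℝ)) * (c ^ (((j:ℝ)+1) * -p) * c ^ ((j:ℝ) * (n:ℝ))) := by ring
    have R : c ^ (-p) * r ^ ((n:ℝ) - p) * c ^ (((n:ℝ) - p) * (j:ℝ))
        = (r ^ ((n:ℝ) - p)) * (c ^ (-p) * c ^ (((n:ℝ)-p) * (j:ℝ))) := by ring
    rw [L, R, ← Real.rpow_add hr, ← Real.rpow_add hc0, ← Real.rpow_add hc0]
    congr 1 <;> ring
  have hAj : ∀ j : ℕ, ∫⁻ z : Eu in A j, ENNReal.ofReal (‖z‖ ^ (-p)) ≤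
      (ENNReal.ofReal (2 ^ p * r ^ ((n:ℝ) - p)) * μB) * ENNReal.ofReal q ^ j := by
    intro j
    have hrad : 0 < r * c ^ (j + 1) := by positivity
    have hb : ∀ z ∈ A j, ENNReal.ofReal (‖z‖ ^ (-p)) ≤
        ENNReal.ofReal ((r * c ^ (j+1)) ^ (-p)) := by
      intro z hz
      apply ENNReal.ofReal_le_ofReal
      apply Real.rpow_le_rpow_of_nonpos hrad _ (neg_nonpos.mpr hp0)
      have := hz.2
      rw [mem_ball, dist_zero_right, not_lt] at this
      exact this
    calc ∫⁻ z : Eu in A j, ENNReal.ofReal (‖z‖ ^ (-p))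
        ≤ ∫⁻ _ : Eu in A j, ENNReal.ofReal ((r * c ^ (j+1)) ^ (-p)) :=
          setLIntegral_mono measurable_const hb
      _ = ENNReal.ofReal ((r * c ^ (j+1)) ^ (-p)) * volume (A j) := setLIntegral_const _ _
      _ ≤ ENNReal.ofReal ((r * c ^ (j+1)) ^ (-p)) * volume (ball (0:Eu) (r * c ^ j)) := by
          gcongr
          exact diff_subset
      _ = ENNReal.ofReal ((r * c ^ (j+1)) ^ (-p)) * (ENNReal.ofReal ((r * c ^ j) ^ (n:ℕ)) * μB) := by
          rw [Measure.addHaar_ball volume 0 (by positivity), finrank_euclideanSpace_fin]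
      _ = ENNReal.ofReal ((r * c ^ (j+1)) ^ (-p) * (r * c ^ j) ^ (n:ℕ)) * μB := by
          rw [ENNReal.ofReal_mul (by positivity), mul_assoc]
      _ = (ENNReal.ofReal (2 ^ p * r ^ ((n:ℝ) - p)) * μB) * ENNReal.ofReal q ^ j := by
          rw [hrc j, ENNReal.ofReal_mul (by positivity : (0:ℝ) ≤ 2^p * r ^ ((n:ℝ)-p)),
            ENNReal.ofReal_pow hq0.le]
          ring
  calc ∫⁻ z : Eu in ball 0 r, ENNReal.ofReal (‖z‖ ^ (-p))
      ≤ ∫⁻ z : Eu in ({0} ∪ ⋃ j, A j : Set Eu), ENNReal.ofReal (‖z‖ ^ (-p)) :=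
        lintegral_mono_set cover
    _ ≤ (∫⁻ z : Eu in ({0} : Set Eu), ENNReal.ofReal (‖z‖ ^ (-p))) +
        ∫⁻ z : Eu in (⋃ j, A j), ENNReal.ofReal (‖z‖ ^ (-p)) := lintegral_union_le _ _ _
    _ = ∫⁻ z : Eu in (⋃ j, A j), ENNReal.ofReal (‖z‖ ^ (-p)) := by
        rw [setLIntegral_measure_zero _ _ (measure_singleton 0), zero_add]
    _ ≤ ∑' j, ∫⁻ z : Eu in A j, ENNReal.ofReal (‖z‖ ^ (-p)) := lintegral_iUnion_le _ _
    _ ≤ ∑' j : ℕ, (ENNReal.ofReal (2 ^ p * r ^ ((n:ℝ) - p)) * μB) * ENNReal.ofReal q ^ j :=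
        ENNReal.tsum_le_tsum hAj
    _ = (ENNReal.ofReal (2 ^ p * r ^ ((n:ℝ) - p)) * μB) * (1 - ENNReal.ofReal q)⁻¹ := by
        rw [ENNReal.tsum_mul_left, ENNReal.tsum_geometric]
    _ ≤ ENNReal.ofReal (2 ^ p) * μB * (1 - ENNReal.ofReal q)⁻¹ * ENNReal.ofReal (r ^ ((n:ℝ) - p)) := by
        rw [ENNReal.ofReal_mul (by positivity)]
        apply le_of_eq; ring
lemma lintegral_compl_ball_rpow0 (hn : 0 < n) {p : ℝ} (hpn : (n:ℝ) < p) :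
    ∃ K : ℝ≥0∞, K ≠ ∞ ∧ ∀ r : ℝ, 0 < r →
      ∫⁻ z : Eu in (ball 0 r)ᶜ, ENNReal.ofReal (‖z‖ ^ (-p)) ≤ K * ENNReal.ofReal (r ^ ((n:ℝ) - p)) := by
  haveI := eu_nontrivial hn
  classical
  have hp0 : 0 ≤ p := le_trans (Nat.cast_nonneg n) hpn.le
  set μB : ℝ≥0∞ := volume (ball (0 : Eu) 1) with hμB
  have hμBfin : μB ≠ ∞ := measure_ball_lt_top.ne
  set q : ℝ := (2:ℝ) ^ ((n:ℝ) - p) with hq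
  have hq0 : 0 < q := by positivity
  have hq1 : q < 1 := by
    apply Real.rpow_lt_one_of_one_lt_of_neg (by norm_num)
    linarith
  refine ⟨ENNReal.ofReal (2 ^ (n:ℝ)) * μB * (1 - ENNReal.ofReal q)⁻¹, ?_, ?_⟩
  · apply ENNReal.mul_ne_top (ENNReal.mul_ne_top ofReal_ne_top hμBfin)
    rw [ENNReal.inv_ne_top]
    simp [tsub_eq_zero_iff_le, ENNReal.one_le_ofReal, not_le, hq1]
  intro r hr
  set c : ℝ := (2:ℝ) with hc
  have hc0 : 0 < c := by norm_num
  have hc1 : 1 < c := by norm_num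
  set A : ℕ → Set (EuclideanSpace ℝ (Fin n)) :=
    fun j => ball 0 (r * c ^ (j + 1)) \ ball 0 (r * c ^ j) with hA
  have cover : (ball (0 : Eu) r)ᶜ ⊆ ⋃ j : ℕ, A j := by
    intro z hz
    rw [mem_compl_iff, mem_ball, dist_zero_right, not_lt] at hz
    have hex : ∃ j : ℕ, ‖z‖ < r * c ^ (j + 1) := by
      obtain ⟨j, hj⟩ := pow_unbounded_of_one_lt (‖z‖ / r) hc1
      refine ⟨j, ?_⟩
      rw [div_lt_iff₀ hr] at hj
      calc ‖z‖ < c ^ j * r := hj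
        _ ≤ r * c ^ (j + 1) := by
            nlinarith [pow_pos hc0 j, pow_succ c j]
    set j := Nat.find hex with hjdef
    have hjle : ‖z‖ < r * c ^ (j + 1) := Nat.find_spec hex
    have hlow : r * c ^ j ≤ ‖z‖ := by
      rcases j.eq_zero_or_pos with h | h
      · simpa [h] using hz
      · have := Nat.find_min hex (m := j - 1) (by omega)
        push_neg at this
        rw [Nat.sub_add_cancel h] at this
        exact this
    refine mem_iUnion.mpr ⟨j, ?_, ?_⟩
    · rw [mem_ball, dist_zero_right]; exact hjle
    · rw [mem_ball, dist_zero_right]; exact not_lt.mpr hlow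
  have hrc : ∀ j : ℕ, (r * c ^ j) ^ (-p) * (r * c ^ (j+1)) ^ (n:ℕ) =
      2 ^ (n:ℝ) * r ^ ((n:ℝ) - p) * q ^ j := by
    intro j
    rw [Real.mul_rpow hr.le (by positivity), ← Real.rpow_natCast c j,
      ← Real.rpow_natCast (r * c ^ (j+1)) n, Real.mul_rpow hr.le (by positivity),
      ← Real.rpow_natCast c (j+1), ← Real.rpow_mul hc0.le, ← Real.rpow_mul hc0.le, hq,
      ← Real.rpow_natCast ((2:ℝ) ^ ((n:ℝ) - p)) j, ← Real.rpow_mul (by norm_num : (0:ℝ) ≤ 2)]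
    push_cast
    have L : r ^ (-p) * c ^ ((j:ℝ) * -p) * (r ^ (n:ℝ) * c ^ (((j:ℝ)+1) * (n:ℝ)))
        = (r ^ (-p) * r ^ (n:ℝ)) * (c ^ ((j:ℝ) * -p) * c ^ (((j:ℝ)+1) * (n:ℝ))) := by ring
    have R : (2:ℝ) ^ (n:ℝ) * r ^ ((n:ℝ) - p) * (2:ℝ) ^ (((n:ℝ) - p) * (j:ℝ))
        = (r ^ ((n:ℝ) - p)) * ((2:ℝ) ^ (n:ℝ) * (2:ℝ) ^ (((n:ℝ)-p) * (j:ℝ))) := by ring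
    rw [L, R, ← Real.rpow_add hr, ← Real.rpow_add hc0,
      hc, ← Real.rpow_add (by norm_num : (0:ℝ) < 2)]
    congr 1 <;> ring
  have hAj : ∀ j : ℕ, ∫⁻ z : Eu in A j, ENNReal.ofReal (‖z‖ ^ (-p)) ≤
      (ENNReal.ofReal (2 ^ (n:ℝ) * r ^ ((n:ℝ) - p)) * μB) * ENNReal.ofReal q ^ j := by
    intro j
    have hrad : 0 < r * c ^ j := by positivity
    have hb : ∀ z ∈ A j, ENNReal.ofReal (‖z‖ ^ (-p)) ≤
        ENNReal.ofReal ((r * c ^ j) ^ (-p)) := by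
      intro z hz
      apply ENNReal.ofReal_le_ofReal
      apply Real.rpow_le_rpow_of_nonpos hrad _ (neg_nonpos.mpr hp0)
      have := hz.2
      rw [mem_ball, dist_zero_right, not_lt] at this
      exact this
    calc ∫⁻ z : Eu in A j, ENNReal.ofReal (‖z‖ ^ (-p))
        ≤ ∫⁻ _ : Eu in A j, ENNReal.ofReal ((r * c ^ j) ^ (-p)) :=
          setLIntegral_mono measurable_const hb
      _ = ENNReal.ofReal ((r * c ^ j) ^ (-p)) * volume (A j) := setLIntegral_const _ _
      _ ≤ ENNReal.ofReal ((r * c ^ j) ^ (-p)) * volume (ball (0:Eu) (r * c ^ (j+1))) := by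
          gcongr
          exact diff_subset
      _ = ENNReal.ofReal ((r * c ^ j) ^ (-p)) * (ENNReal.ofReal ((r * c ^ (j+1)) ^ (n:ℕ)) * μB) := by
          rw [Measure.addHaar_ball volume 0 (by positivity), finrank_euclideanSpace_fin]
      _ = ENNReal.ofReal ((r * c ^ j) ^ (-p) * (r * c ^ (j+1)) ^ (n:ℕ)) * μB := by
          rw [ENNReal.ofReal_mul (by positivity), mul_assoc]
      _ = (ENNReal.ofReal (2 ^ (n:ℝ) * r ^ ((n:ℝ) - p)) * μB) * ENNReal.ofReal q ^ j := by
          rw [hrc j, ENNReal.ofReal_mul (by positivity : (0:ℝ) ≤ 2^(n:ℝ) * r ^ ((n:ℝ)-p)),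
            ENNReal.ofReal_pow hq0.le]
          ring
  calc ∫⁻ z : Eu in (ball 0 r)ᶜ, ENNReal.ofReal (‖z‖ ^ (-p))
      ≤ ∫⁻ z : Eu in (⋃ j, A j), ENNReal.ofReal (‖z‖ ^ (-p)) := lintegral_mono_set cover
    _ ≤ ∑' j, ∫⁻ z : Eu in A j, ENNReal.ofReal (‖z‖ ^ (-p)) := lintegral_iUnion_le _ _
    _ ≤ ∑' j : ℕ, (ENNReal.ofReal (2 ^ (n:ℝ) * r ^ ((n:ℝ) - p)) * μB) * ENNReal.ofReal q ^ j :=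
        ENNReal.tsum_le_tsum hAj
    _ = (ENNReal.ofReal (2 ^ (n:ℝ) * r ^ ((n:ℝ) - p)) * μB) * (1 - ENNReal.ofReal q)⁻¹ := by
        rw [ENNReal.tsum_mul_left, ENNReal.tsum_geometric]
    _ ≤ ENNReal.ofReal (2 ^ (n:ℝ)) * μB * (1 - ENNReal.ofReal q)⁻¹ *
          ENNReal.ofReal (r ^ ((n:ℝ) - p)) := by
        rw [ENNReal.ofReal_mul (by positivity)]
        apply le_of_eq; ring

lemma setLIntegral_shift (F : EuclideanSpace ℝ (Fin n) → ℝ≥0∞) (hF : Measurable F)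
    (s : Set (EuclideanSpace ℝ (Fin n))) (hs : MeasurableSet s) (u : Eu) :
    ∫⁻ z : Eu in (fun z => z - u) ⁻¹' s, F (z - u) = ∫⁻ z : Eu in s, F z := by
  have hmeas : Measurable fun z : Eu => z - u := measurable_id.sub_const u
  rw [← lintegral_indicator hs, ← lintegral_indicator (hmeas hs)]
  have : ∀ z : Eu, ((fun z : Eu => z - u) ⁻¹' s).indicator (fun z => F (z - u)) z
      = s.indicator F (z - u) := by
    intro z
    by_cases h : z - u ∈ s <;> simp [indicator, h]
  simp_rw [this, sub_eq_add_neg]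
  exact lintegral_add_right_eq_self (fun z => s.indicator F z) (-u)

lemma ball_shift (u : Eu) (r : ℝ) :
    (fun z : Eu => z - u) ⁻¹' (ball 0 r) = ball u r := by
  ext z
  simp [mem_ball, dist_eq_norm]

lemma compl_ball_shift (u : Eu) (r : ℝ) :
    (fun z : Eu => z - u) ⁻¹' (ball 0 r)ᶜ = (ball u r)ᶜ := by
  ext z
  simp [mem_ball, dist_eq_norm]

lemma wce_measF {p : ℝ} : Measurable fun z : Eu => ENNReal.ofReal (‖z‖ ^ (-p)) := by
  fun_prop

lemma lintegral_ball_rpow (hn : 0 < n) {p : ℝ} (hp0 : 0 ≤ p) (hpn : p < n) :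
    ∃ K : ℝ≥0∞, K ≠ ∞ ∧ ∀ (u : Eu) (r : ℝ), 0 < r →
      ∫⁻ z : Eu in ball u r, ENNReal.ofReal (‖z - u‖ ^ (-p)) ≤
        K * ENNReal.ofReal (r ^ ((n:ℝ) - p)) := by
  obtain ⟨K, hK, hb⟩ := lintegral_ball_rpow0 hn hp0 hpn
  refine ⟨K, hK, fun u r hr => ?_⟩
  rw [← ball_shift u r, setLIntegral_shift _ wce_measF _ measurableSet_ball u]
  exact hb r hr

lemma lintegral_compl_ball_rpow (hn : 0 < n) {p : ℝ} (hpn : (n:ℝ) < p) :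
    ∃ K : ℝ≥0∞, K ≠ ∞ ∧ ∀ (u : Eu) (r : ℝ), 0 < r →
      ∫⁻ z : Eu in (ball u r)ᶜ, ENNReal.ofReal (‖z - u‖ ^ (-p)) ≤
        K * ENNReal.ofReal (r ^ ((n:ℝ) - p)) := by
  obtain ⟨K, hK, hb⟩ := lintegral_compl_ball_rpow0 hn hpn
  refine ⟨K, hK, fun u r hr => ?_⟩
  rw [← compl_ball_shift u r, setLIntegral_shift _ wce_measF _ measurableSet_ball.compl u]
  exact hb r hr

/-! ### Japanese bracket facts -/

lemma wce_one_le_jb (z : Eu) : 1 ≤ Real.sqrt (1 + ‖z‖ ^ 2) :=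
  calc (1:ℝ) = Real.sqrt 1 := by simp
    _ ≤ Real.sqrt (1 + ‖z‖ ^ 2) := Real.sqrt_le_sqrt (by nlinarith [sq_nonneg ‖z‖])

lemma wce_jb_pos (z : Eu) : 0 < Real.sqrt (1 + ‖z‖ ^ 2) :=
  lt_of_lt_of_le one_pos (wce_one_le_jb z)

lemma wce_norm_le_jb (z : Eu) : ‖z‖ ≤ Real.sqrt (1 + ‖z‖ ^ 2) := by
  have h := Real.sqrt_le_sqrt (show ‖z‖ ^ 2 ≤ 1 + ‖z‖ ^ 2 by linarith)
  rwa [Real.sqrt_sq (norm_nonneg z)] at h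

lemma wce_W_le_one {s : ℝ} (hs : 0 ≤ s) (z : Eu) :
    Real.sqrt (1 + ‖z‖ ^ 2) ^ (-s) ≤ 1 :=
  Real.rpow_le_one_of_one_le_of_nonpos (wce_one_le_jb z) (neg_nonpos.mpr hs)

lemma wce_W_mono {s t : ℝ} (hts : t ≤ s) (z : Eu) :
    Real.sqrt (1 + ‖z‖ ^ 2) ^ (-s) ≤ Real.sqrt (1 + ‖z‖ ^ 2) ^ (-t) :=
  Real.rpow_le_rpow_of_exponent_le (wce_one_le_jb z) (by linarith)

lemma wce_W_le_norm {t : ℝ} (ht : 0 ≤ t) {z : Eu} (hz : z ≠ 0) :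
    Real.sqrt (1 + ‖z‖ ^ 2) ^ (-t) ≤ ‖z‖ ^ (-t) :=
  Real.rpow_le_rpow_of_nonpos (norm_pos_iff.mpr hz) (wce_norm_le_jb z) (neg_nonpos.mpr ht)

lemma wce_lintegral_jb (hn : 0 < n) {τ : ℝ} (hτ : (n:ℝ) < τ) :
    (∫⁻ z : Eu, ENNReal.ofReal (Real.sqrt (1 + ‖z‖ ^ 2) ^ (-τ))) < ∞ := by
  have hτ0 : 0 < τ := lt_of_le_of_lt (Nat.cast_nonneg n) hτ
  have hpt : ∀ z : Eu, Real.sqrt (1 + ‖z‖ ^ 2) ^ (-τ) ≤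
      2 ^ (τ/2) * (1 + ‖z‖) ^ (-τ) := by
    intro z
    have h := rpow_neg_one_add_norm_sq_le (x := z) (r := τ) hτ0
    rwa [Real.rpow_div_two_eq_sqrt _ (by positivity)] at h
  calc (∫⁻ z : Eu, ENNReal.ofReal (Real.sqrt (1 + ‖z‖ ^ 2) ^ (-τ)))
      ≤ ∫⁻ z : Eu, ENNReal.ofReal (2 ^ (τ/2)) * ENNReal.ofReal ((1 + ‖z‖) ^ (-τ)) := by
        apply lintegral_mono
        intro z
        dsimp only
        rw [← ENNReal.ofReal_mul (by positivity)]
        exact ENNReal.ofReal_le_ofReal (hpt z)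
    _ = ENNReal.ofReal (2 ^ (τ/2)) * ∫⁻ z : Eu, ENNReal.ofReal ((1 + ‖z‖) ^ (-τ)) := by
        rw [lintegral_const_mul _ (by fun_prop)]
    _ < ∞ := by
        apply ENNReal.mul_lt_top ENNReal.ofReal_lt_top
        apply finite_integral_one_add_norm
        rwa [finrank_euclideanSpace_fin]

lemma wce_measFu (u : Eu) (p : ℝ) :
    Measurable fun z : Eu => ENNReal.ofReal (‖z - u‖ ^ (-p)) := by fun_prop

lemma wce_measW (s : ℝ) :
    Measurable fun z : Eu => ENNReal.ofReal (Real.sqrt (1 + ‖z‖ ^ 2) ^ (-s)) := by fun_prop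

lemma wce_absorb {e ρ : ℝ} (he : 0 ≤ e) (hρ : 1/2 ≤ ρ) :
    (1 : ℝ≥0∞) ≤ ENNReal.ofReal (2 ^ e) * ENNReal.ofReal (ρ ^ e) := by
  rw [← ENNReal.ofReal_mul (by positivity), ← ENNReal.ofReal_one]
  apply ENNReal.ofReal_le_ofReal
  calc (1:ℝ) = 1 ^ e := (Real.one_rpow e).symm
    _ ≤ (2 * ρ) ^ e := Real.rpow_le_rpow (by norm_num) (by linarith) he
    _ = 2 ^ e * ρ ^ e := Real.mul_rpow (by norm_num) (by linarith)

lemma wce_absorb' {e ρ : ℝ} (he : 0 ≤ e) (hρ : 1/2 ≤ ρ) (K : ℝ≥0∞) :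
    K ≤ (K * ENNReal.ofReal (2 ^ e)) * ENNReal.ofReal (ρ ^ e) := by
  calc K = K * 1 := (mul_one K).symm
    _ ≤ K * (ENNReal.ofReal (2 ^ e) * ENNReal.ofReal (ρ ^ e)) :=
        mul_le_mul_right (wce_absorb he hρ) K
    _ = (K * ENNReal.ofReal (2 ^ e)) * ENNReal.ofReal (ρ ^ e) := by ring

set_option maxHeartbeats 1000000 in
lemma wce_U (hn : 0 < n) {s q t : ℝ} (hs0 : 0 < s) (hq0 : 0 ≤ q) (hqn : q < n)
    (ht0 : 0 ≤ t) (hts : t ≤ s) (htq : t + q ≠ (n:ℝ)) :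
    ∃ K : ℝ≥0∞, K ≠ ∞ ∧ ∀ (u : Eu) (ρ : ℝ), 1/2 ≤ ρ →
      ∫⁻ z : Eu in ball u ρ,
          ENNReal.ofReal (Real.sqrt (1 + ‖z‖ ^ 2) ^ (-s)) * ENNReal.ofReal (‖z - u‖ ^ (-q))
        ≤ K * ENNReal.ofReal (ρ ^ max ((n:ℝ) - q - t) 0) := by
  haveI := eu_nontrivial hn
  set e : ℝ := max ((n:ℝ) - q - t) 0 with he
  have he0 : 0 ≤ e := le_max_right _ _
  -- the three piece bounds, each of the form  ∀ u ρ, ... ≤ K * ofReal (ρ ^ e)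
  -- Piece 1 : ball u 1
  obtain ⟨K₁, hK₁, hP₁⟩ := lintegral_ball_rpow hn hq0 hqn
  -- Piece 2 and 3 constants
  obtain ⟨K₂, hK₂, hB₂⟩ : ∃ K : ℝ≥0∞, K ≠ ∞ ∧ ∀ (u : Eu) (ρ : ℝ), 1/2 ≤ ρ →
      ∫⁻ z : Eu in (ball u ρ \ ball u 1) ∩ {z : Eu | ‖z‖ ≤ 2 * ‖z - u‖},
          ENNReal.ofReal (4 ^ q * Real.sqrt (1 + ‖z‖ ^ 2) ^ (-(t + q)))
        ≤ K * ENNReal.ofReal (ρ ^ e) := by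
    rcases lt_or_gt_of_ne htq with hlt | hgt
    · -- t + q < n : integrate over ball 0 (2ρ) against ‖z‖^{-(t+q)}
      obtain ⟨K, hK, hP⟩ := lintegral_ball_rpow hn (by positivity) hlt
      refine ⟨ENNReal.ofReal (4 ^ q) * (K * ENNReal.ofReal (2 ^ ((n:ℝ) - (t+q)))), ?_, ?_⟩
      · exact ENNReal.mul_ne_top ofReal_ne_top (ENNReal.mul_ne_top hK ofReal_ne_top)
      intro u ρ hρ
      have hsub : (ball u ρ \ ball u 1) ∩ {z : Eu | ‖z‖ ≤ 2 * ‖z - u‖} ⊆ ball (0:Eu) (2*ρ) := by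
        intro z hz
        rw [mem_ball, dist_zero_right]
        have h1 : ‖z - u‖ < ρ := by
          have := hz.1.1; rwa [mem_ball, dist_eq_norm] at this
        have h2 := hz.2
        simp only [mem_setOf_eq] at h2
        linarith
      calc ∫⁻ z : Eu in (ball u ρ \ ball u 1) ∩ {z : Eu | ‖z‖ ≤ 2 * ‖z - u‖},
              ENNReal.ofReal (4 ^ q * Real.sqrt (1 + ‖z‖ ^ 2) ^ (-(t + q)))
          ≤ ∫⁻ z : Eu in ball (0:Eu) (2*ρ),
              ENNReal.ofReal (4 ^ q * Real.sqrt (1 + ‖z‖ ^ 2) ^ (-(t + q))) :=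
            lintegral_mono_set hsub
        _ = ENNReal.ofReal (4 ^ q) * ∫⁻ z : Eu in ball (0:Eu) (2*ρ),
              ENNReal.ofReal (Real.sqrt (1 + ‖z‖ ^ 2) ^ (-(t + q))) := by
            simp_rw [ENNReal.ofReal_mul (by positivity : (0:ℝ) ≤ 4 ^ q)]
            rw [lintegral_const_mul' _ _ ofReal_ne_top]
        _ ≤ ENNReal.ofReal (4 ^ q) * ∫⁻ z : Eu in ball (0:Eu) (2*ρ),
              ENNReal.ofReal (‖z - 0‖ ^ (-(t + q))) := by
            apply mul_le_mul_right
            apply setLIntegral_mono_ae (wce_measFu (0:Eu) (t+q)).aemeasurable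
            have h0 : ∀ᵐ z : Eu ∂volume, z ≠ (0:Eu) :=
              ae_iff.mpr (by simpa using measure_singleton (0:Eu))
            filter_upwards [h0] with z hz _
            rw [sub_zero]
            exact ENNReal.ofReal_le_ofReal (wce_W_le_norm (by positivity) hz)
        _ ≤ ENNReal.ofReal (4 ^ q) * (K * ENNReal.ofReal ((2*ρ) ^ ((n:ℝ) - (t+q)))) :=
            mul_le_mul_right (hP 0 (2*ρ) (by linarith)) _
        _ = ENNReal.ofReal (4 ^ q) * (K * ENNReal.ofReal (2 ^ ((n:ℝ) - (t+q)))) *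
              ENNReal.ofReal (ρ ^ e) := by
            rw [Real.mul_rpow (by norm_num) (by linarith),
              ENNReal.ofReal_mul (by positivity),
              he, max_eq_left (by linarith : (0:ℝ) ≤ (n:ℝ) - q - t),
              show (n:ℝ) - (t+q) = (n:ℝ) - q - t by ring]
            ring
    · -- t + q > n : integrate globally against the japanese bracket
      have hjb := wce_lintegral_jb hn (τ := t + q) hgt
      refine ⟨(ENNReal.ofReal (4 ^ q) * (∫⁻ z : Eu,
          ENNReal.ofReal (Real.sqrt (1 + ‖z‖ ^ 2) ^ (-(t + q))))) * ENNReal.ofReal (2 ^ e), ?_, ?_⟩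
      · exact ENNReal.mul_ne_top (ENNReal.mul_ne_top ofReal_ne_top hjb.ne) ofReal_ne_top
      intro u ρ hρ
      calc ∫⁻ z : Eu in (ball u ρ \ ball u 1) ∩ {z : Eu | ‖z‖ ≤ 2 * ‖z - u‖},
              ENNReal.ofReal (4 ^ q * Real.sqrt (1 + ‖z‖ ^ 2) ^ (-(t + q)))
          ≤ ∫⁻ z : Eu, ENNReal.ofReal (4 ^ q * Real.sqrt (1 + ‖z‖ ^ 2) ^ (-(t + q))) :=
            setLIntegral_le_lintegral _ _
        _ = ENNReal.ofReal (4 ^ q) * ∫⁻ z : Eu,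
              ENNReal.ofReal (Real.sqrt (1 + ‖z‖ ^ 2) ^ (-(t + q))) := by
            simp_rw [ENNReal.ofReal_mul (by positivity : (0:ℝ) ≤ 4 ^ q)]
            rw [lintegral_const_mul' _ _ ofReal_ne_top]
        _ ≤ _ := wce_absorb' he0 hρ _
  obtain ⟨K₃, hK₃, hB₃⟩ : ∃ K : ℝ≥0∞, K ≠ ∞ ∧ ∀ (u : Eu) (ρ : ℝ), 1/2 ≤ ρ →
      ∫⁻ z : Eu in (ball u ρ \ ball u 1) ∩ {z : Eu | 2 * ‖z - u‖ < ‖z‖},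
          ENNReal.ofReal (‖z - u‖ ^ (-(t + q)))
        ≤ K * ENNReal.ofReal (ρ ^ e) := by
    rcases lt_or_gt_of_ne htq with hlt | hgt
    · obtain ⟨K, hK, hP⟩ := lintegral_ball_rpow hn (by positivity) hlt
      refine ⟨K, hK, fun u ρ hρ => ?_⟩
      calc ∫⁻ z : Eu in (ball u ρ \ ball u 1) ∩ {z : Eu | 2 * ‖z - u‖ < ‖z‖},
              ENNReal.ofReal (‖z - u‖ ^ (-(t + q)))
          ≤ ∫⁻ z : Eu in ball u ρ, ENNReal.ofReal (‖z - u‖ ^ (-(t + q))) :=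
            lintegral_mono_set (fun z hz => hz.1.1)
        _ ≤ K * ENNReal.ofReal (ρ ^ ((n:ℝ) - (t+q))) := hP u ρ (by linarith)
        _ = K * ENNReal.ofReal (ρ ^ e) := by
            rw [he, max_eq_left (by linarith : (0:ℝ) ≤ (n:ℝ) - q - t),
              show (n:ℝ) - (t+q) = (n:ℝ) - q - t by ring]
    · obtain ⟨K, hK, hQ⟩ := lintegral_compl_ball_rpow hn hgt
      refine ⟨K * ENNReal.ofReal (1 ^ ((n:ℝ) - (t+q))) * ENNReal.ofReal (2 ^ e), ?_,
        fun u ρ hρ => ?_⟩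
      · exact ENNReal.mul_ne_top (ENNReal.mul_ne_top hK ofReal_ne_top) ofReal_ne_top
      calc ∫⁻ z : Eu in (ball u ρ \ ball u 1) ∩ {z : Eu | 2 * ‖z - u‖ < ‖z‖},
              ENNReal.ofReal (‖z - u‖ ^ (-(t + q)))
          ≤ ∫⁻ z : Eu in (ball u 1)ᶜ, ENNReal.ofReal (‖z - u‖ ^ (-(t + q))) :=
            lintegral_mono_set (fun z hz => hz.1.2)
        _ ≤ K * ENNReal.ofReal (1 ^ ((n:ℝ) - (t+q))) := hQ u 1 one_pos
        _ ≤ _ := wce_absorb' he0 hρ _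
  refine ⟨(K₁ * ENNReal.ofReal (2 ^ e) * ENNReal.ofReal (1 ^ ((n:ℝ) - q))) + K₂ + K₃, ?_, ?_⟩
  · refine ENNReal.add_ne_top.mpr ⟨ENNReal.add_ne_top.mpr ⟨?_, hK₂⟩, hK₃⟩
    exact ENNReal.mul_ne_top (ENNReal.mul_ne_top hK₁ ofReal_ne_top) ofReal_ne_top
  intro u ρ hρ
  set s₂ : Set (EuclideanSpace ℝ (Fin n)) :=
    (ball u ρ \ ball u 1) ∩ {z : Eu | ‖z‖ ≤ 2 * ‖z - u‖} with hs₂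
  set s₃ : Set (EuclideanSpace ℝ (Fin n)) :=
    (ball u ρ \ ball u 1) ∩ {z : Eu | 2 * ‖z - u‖ < ‖z‖} with hs₃
  have cover : ball u ρ ⊆ ball u 1 ∪ (s₂ ∪ s₃) := by
    intro z hz
    by_cases h1 : z ∈ ball u 1
    · exact Or.inl h1
    rcases le_or_gt ‖z‖ (2 * ‖z - u‖) with h | h
    · exact Or.inr (Or.inl ⟨⟨hz, h1⟩, h⟩)
    · exact Or.inr (Or.inr ⟨⟨hz, h1⟩, h⟩)
  have hmem : ∀ z : Eu, z ∈ ball u ρ \ ball u 1 → 1 ≤ ‖z - u‖ := by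
    intro z hz
    have := hz.2
    rw [mem_ball, dist_eq_norm, not_lt] at this
    exact this
  -- the integrand
  set g : Eu → ℝ≥0∞ := fun z =>
    ENNReal.ofReal (Real.sqrt (1 + ‖z‖ ^ 2) ^ (-s)) * ENNReal.ofReal (‖z - u‖ ^ (-q)) with hg
  have hb1 : ∫⁻ z : Eu in ball u 1, g z ≤
      K₁ * ENNReal.ofReal (2 ^ e) * ENNReal.ofReal (1 ^ ((n:ℝ) - q)) * ENNReal.ofReal (ρ ^ e) := by
    calc ∫⁻ z : Eu in ball u 1, g z
        ≤ ∫⁻ z : Eu in ball u 1, ENNReal.ofReal (‖z - u‖ ^ (-q)) := by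
          apply setLIntegral_mono (wce_measFu u q)
          intro z _
          rw [hg]
          calc ENNReal.ofReal (Real.sqrt (1 + ‖z‖ ^ 2) ^ (-s)) * ENNReal.ofReal (‖z - u‖ ^ (-q))
              ≤ 1 * ENNReal.ofReal (‖z - u‖ ^ (-q)) :=
                mul_le_mul_left (ENNReal.ofReal_le_one.mpr (wce_W_le_one hs0.le z)) _
            _ = ENNReal.ofReal (‖z - u‖ ^ (-q)) := one_mul _
      _ ≤ K₁ * ENNReal.ofReal (1 ^ ((n:ℝ) - q)) := hP₁ u 1 one_pos
      _ ≤ K₁ * ENNReal.ofReal (1 ^ ((n:ℝ) - q)) * (ENNReal.ofReal (2 ^ e) * ENNReal.ofReal (ρ ^ e)) :=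
          le_mul_of_one_le_right' (wce_absorb he0 hρ)
      _ = K₁ * ENNReal.ofReal (2 ^ e) * ENNReal.ofReal (1 ^ ((n:ℝ) - q)) * ENNReal.ofReal (ρ ^ e) := by
          ring
  have hb2 : ∫⁻ z : Eu in s₂, g z ≤ K₂ * ENNReal.ofReal (ρ ^ e) := by
    have hmono : ∫⁻ z : Eu in s₂, g z ≤
        ∫⁻ z : Eu in s₂, ENNReal.ofReal (4 ^ q * Real.sqrt (1 + ‖z‖ ^ 2) ^ (-(t + q))) := by
      have hmW : Measurable fun z : Eu =>
          ENNReal.ofReal (4 ^ q * Real.sqrt (1 + ‖z‖ ^ 2) ^ (-(t + q))) := by fun_prop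
      apply setLIntegral_mono hmW
      intro z hz
      have ha1 : 1 ≤ ‖z - u‖ := hmem z hz.1
      have hz2 : ‖z‖ ≤ 2 * ‖z - u‖ := hz.2
      have hjb4 : Real.sqrt (1 + ‖z‖ ^ 2) ≤ 4 * ‖z - u‖ := by
        have := sqrt_one_add_norm_sq_le z
        linarith
      have hjbpos := wce_jb_pos z
      have haq : ‖z - u‖ ^ (-q) ≤ 4 ^ q * Real.sqrt (1 + ‖z‖ ^ 2) ^ (-q) := by
        have h1 : Real.sqrt (1 + ‖z‖ ^ 2) / 4 ≤ ‖z - u‖ := by linarith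
        have h2 : (0:ℝ) < Real.sqrt (1 + ‖z‖ ^ 2) / 4 := by positivity
        have := Real.rpow_le_rpow_of_nonpos h2 h1 (neg_nonpos.mpr hq0)
        calc ‖z - u‖ ^ (-q) ≤ (Real.sqrt (1 + ‖z‖ ^ 2) / 4) ^ (-q) := this
          _ = Real.sqrt (1 + ‖z‖ ^ 2) ^ (-q) / 4 ^ (-q) :=
            Real.div_rpow hjbpos.le (by norm_num) _
          _ = 4 ^ q * Real.sqrt (1 + ‖z‖ ^ 2) ^ (-q) := by
            rw [Real.rpow_neg (by norm_num : (0:ℝ) ≤ 4), div_eq_mul_inv, inv_inv]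
            ring
      rw [hg]
      calc ENNReal.ofReal (Real.sqrt (1 + ‖z‖ ^ 2) ^ (-s)) * ENNReal.ofReal (‖z - u‖ ^ (-q))
          ≤ ENNReal.ofReal (Real.sqrt (1 + ‖z‖ ^ 2) ^ (-t)) *
            ENNReal.ofReal (4 ^ q * Real.sqrt (1 + ‖z‖ ^ 2) ^ (-q)) :=
            mul_le_mul' (ENNReal.ofReal_le_ofReal (wce_W_mono hts z))
              (ENNReal.ofReal_le_ofReal haq)
        _ = ENNReal.ofReal (4 ^ q * Real.sqrt (1 + ‖z‖ ^ 2) ^ (-(t + q))) := by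
            rw [← ENNReal.ofReal_mul (by positivity)]
            congr 1
            rw [neg_add, Real.rpow_add hjbpos]
            ring
    exact le_trans hmono (hB₂ u ρ hρ)
  have hb3 : ∫⁻ z : Eu in s₃, g z ≤ K₃ * ENNReal.ofReal (ρ ^ e) := by
    have hmono : ∫⁻ z : Eu in s₃, g z ≤
        ∫⁻ z : Eu in s₃, ENNReal.ofReal (‖z - u‖ ^ (-(t + q))) := by
      apply setLIntegral_mono (wce_measFu u (t+q))
      intro z hz
      have ha1 : 1 ≤ ‖z - u‖ := hmem z hz.1
      have hz2 : 2 * ‖z - u‖ < ‖z‖ := hz.2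
      have hzpos : (0:ℝ) < ‖z‖ := by linarith
      have hz0 : z ≠ 0 := norm_pos_iff.mp hzpos
      have hWt : Real.sqrt (1 + ‖z‖ ^ 2) ^ (-s) ≤ ‖z - u‖ ^ (-t) := by
        calc Real.sqrt (1 + ‖z‖ ^ 2) ^ (-s) ≤ Real.sqrt (1 + ‖z‖ ^ 2) ^ (-t) := wce_W_mono hts z
          _ ≤ ‖z‖ ^ (-t) := wce_W_le_norm ht0 hz0
          _ ≤ ‖z - u‖ ^ (-t) :=
            Real.rpow_le_rpow_of_nonpos (by linarith) (by linarith) (neg_nonpos.mpr ht0)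
      rw [hg]
      calc ENNReal.ofReal (Real.sqrt (1 + ‖z‖ ^ 2) ^ (-s)) * ENNReal.ofReal (‖z - u‖ ^ (-q))
          ≤ ENNReal.ofReal (‖z - u‖ ^ (-t)) * ENNReal.ofReal (‖z - u‖ ^ (-q)) :=
            mul_le_mul_left (ENNReal.ofReal_le_ofReal hWt) _
        _ = ENNReal.ofReal (‖z - u‖ ^ (-(t + q))) := by
            rw [← ENNReal.ofReal_mul (by positivity)]
            congr 1
            rw [neg_add, Real.rpow_add (by linarith : (0:ℝ) < ‖z - u‖)]
    exact le_trans hmono (hB₃ u ρ hρ)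
  calc ∫⁻ z : Eu in ball u ρ, g z
      ≤ ∫⁻ z : Eu in ball u 1 ∪ (s₂ ∪ s₃), g z := lintegral_mono_set cover
    _ ≤ (∫⁻ z : Eu in ball u 1, g z) + ∫⁻ z : Eu in s₂ ∪ s₃, g z := lintegral_union_le _ _ _
    _ ≤ (∫⁻ z : Eu in ball u 1, g z) + ((∫⁻ z : Eu in s₂, g z) + ∫⁻ z : Eu in s₃, g z) :=
        add_le_add_right (lintegral_union_le _ _ _) _
    _ ≤ K₁ * ENNReal.ofReal (2 ^ e) * ENNReal.ofReal (1 ^ ((n:ℝ) - q)) * ENNReal.ofReal (ρ ^ e) +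
        (K₂ * ENNReal.ofReal (ρ ^ e) + K₃ * ENNReal.ofReal (ρ ^ e)) :=
        add_le_add hb1 (add_le_add hb2 hb3)
    _ = _ := by ring

lemma wce_R (hn : 0 < n) {s q t : ℝ} (hs0 : 0 < s) (hq0 : 0 ≤ q)
    (ht0 : 0 ≤ t) (hts : t ≤ s) (htn : t < n) (htq : (n:ℝ) < q + t) :
    ∃ K : ℝ≥0∞, K ≠ ∞ ∧ ∀ (u : Eu) (ρ : ℝ), 1/2 ≤ ρ →
      ∫⁻ z : Eu in (ball u ρ)ᶜ,
          ENNReal.ofReal (Real.sqrt (1 + ‖z‖ ^ 2) ^ (-s)) * ENNReal.ofReal (‖z - u‖ ^ (-q))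
        ≤ K * ENNReal.ofReal (ρ ^ ((n:ℝ) - q - t)) := by
  haveI := eu_nontrivial hn
  have htq' : (n:ℝ) < t + q := by linarith
  obtain ⟨KQ, hKQ, hQ⟩ := lintegral_compl_ball_rpow hn htq'
  obtain ⟨KP, hKP, hP⟩ := lintegral_ball_rpow hn ht0 htn
  refine ⟨KQ + KP * ENNReal.ofReal (4 ^ ((n:ℝ) - t)) +
      ENNReal.ofReal (4 ^ q) * KQ * ENNReal.ofReal (4 ^ ((n:ℝ) - (t+q))), ?_, ?_⟩
  · refine ENNReal.add_ne_top.mpr ⟨ENNReal.add_ne_top.mpr ⟨hKQ, ?_⟩, ?_⟩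
    · exact ENNReal.mul_ne_top hKP ofReal_ne_top
    · exact ENNReal.mul_ne_top (ENNReal.mul_ne_top ofReal_ne_top hKQ) ofReal_ne_top
  intro u ρ hρ
  have hρ0 : (0:ℝ) < ρ := by linarith
  set g : Eu → ℝ≥0∞ := fun z =>
    ENNReal.ofReal (Real.sqrt (1 + ‖z‖ ^ 2) ^ (-s)) * ENNReal.ofReal (‖z - u‖ ^ (-q)) with hg
  set T₂ : Set (EuclideanSpace ℝ (Fin n)) := (ball u ρ)ᶜ ∩ {z : Eu | 2 * ‖z - u‖ < ‖z‖} with hT₂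
  set T₁ : Set (EuclideanSpace ℝ (Fin n)) := (ball u ρ)ᶜ ∩ {z : Eu | ‖z‖ ≤ 2 * ‖z - u‖} with hT₁
  have hmem : ∀ z : Eu, z ∈ (ball u ρ)ᶜ → ρ ≤ ‖z - u‖ := by
    intro z hz
    rw [mem_compl_iff, mem_ball, dist_eq_norm, not_lt] at hz
    exact hz
  have cover : (ball u ρ)ᶜ ⊆ T₂ ∪ ((T₁ ∩ ball (0:Eu) (4*ρ)) ∪ (T₁ \ ball (0:Eu) (4*ρ))) := by
    intro z hz
    rcases lt_or_ge (2 * ‖z - u‖) ‖z‖ with h | h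
    · exact Or.inl ⟨hz, h⟩
    rcases em (z ∈ ball (0:Eu) (4*ρ)) with h4 | h4
    · exact Or.inr (Or.inl ⟨⟨hz, h⟩, h4⟩)
    · exact Or.inr (Or.inr ⟨⟨hz, h⟩, h4⟩)
  have hb2 : ∫⁻ z : Eu in T₂, g z ≤ KQ * ENNReal.ofReal (ρ ^ ((n:ℝ) - q - t)) := by
    have hmono : ∫⁻ z : Eu in T₂, g z ≤
        ∫⁻ z : Eu in T₂, ENNReal.ofReal (‖z - u‖ ^ (-(t + q))) := by
      apply setLIntegral_mono (wce_measFu u (t+q))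
      intro z hz
      have haρ : ρ ≤ ‖z - u‖ := hmem z hz.1
      have hz2 : 2 * ‖z - u‖ < ‖z‖ := hz.2
      have hapos : (0:ℝ) < ‖z - u‖ := by linarith
      have hzpos : (0:ℝ) < ‖z‖ := by linarith
      have hz0 : z ≠ 0 := norm_pos_iff.mp hzpos
      have hWt : Real.sqrt (1 + ‖z‖ ^ 2) ^ (-s) ≤ ‖z - u‖ ^ (-t) := by
        calc Real.sqrt (1 + ‖z‖ ^ 2) ^ (-s) ≤ Real.sqrt (1 + ‖z‖ ^ 2) ^ (-t) := wce_W_mono hts z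
          _ ≤ ‖z‖ ^ (-t) := wce_W_le_norm ht0 hz0
          _ ≤ ‖z - u‖ ^ (-t) :=
            Real.rpow_le_rpow_of_nonpos hapos (by linarith) (neg_nonpos.mpr ht0)
      rw [hg]
      calc ENNReal.ofReal (Real.sqrt (1 + ‖z‖ ^ 2) ^ (-s)) * ENNReal.ofReal (‖z - u‖ ^ (-q))
          ≤ ENNReal.ofReal (‖z - u‖ ^ (-t)) * ENNReal.ofReal (‖z - u‖ ^ (-q)) :=
            mul_le_mul_left (ENNReal.ofReal_le_ofReal hWt) _
        _ = ENNReal.ofReal (‖z - u‖ ^ (-(t + q))) := by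
            rw [← ENNReal.ofReal_mul (by positivity)]
            congr 1
            rw [neg_add, Real.rpow_add hapos]
    calc ∫⁻ z : Eu in T₂, g z ≤ ∫⁻ z : Eu in T₂, ENNReal.ofReal (‖z - u‖ ^ (-(t + q))) := hmono
      _ ≤ ∫⁻ z : Eu in (ball u ρ)ᶜ, ENNReal.ofReal (‖z - u‖ ^ (-(t + q))) :=
          lintegral_mono_set (fun z hz => hz.1)
      _ ≤ KQ * ENNReal.ofReal (ρ ^ ((n:ℝ) - (t + q))) := hQ u ρ hρ0
      _ = KQ * ENNReal.ofReal (ρ ^ ((n:ℝ) - q - t)) := by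
          rw [show (n:ℝ) - (t + q) = (n:ℝ) - q - t by ring]
  have hb1a : ∫⁻ z : Eu in T₁ ∩ ball (0:Eu) (4*ρ), g z ≤
      KP * ENNReal.ofReal (4 ^ ((n:ℝ) - t)) * ENNReal.ofReal (ρ ^ ((n:ℝ) - q - t)) := by
    have hmono : ∫⁻ z : Eu in T₁ ∩ ball (0:Eu) (4*ρ), g z ≤
        ∫⁻ z : Eu in T₁ ∩ ball (0:Eu) (4*ρ),
          ENNReal.ofReal (ρ ^ (-q)) * ENNReal.ofReal (Real.sqrt (1 + ‖z‖ ^ 2) ^ (-t)) := by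
      have hmW : Measurable fun z : Eu =>
          ENNReal.ofReal (ρ ^ (-q)) * ENNReal.ofReal (Real.sqrt (1 + ‖z‖ ^ 2) ^ (-t)) :=
        (wce_measW t).const_mul _
      apply setLIntegral_mono hmW
      intro z hz
      have haρ : ρ ≤ ‖z - u‖ := hmem z hz.1.1
      have haq : ‖z - u‖ ^ (-q) ≤ ρ ^ (-q) :=
        Real.rpow_le_rpow_of_nonpos hρ0 haρ (neg_nonpos.mpr hq0)
      rw [hg]
      calc ENNReal.ofReal (Real.sqrt (1 + ‖z‖ ^ 2) ^ (-s)) * ENNReal.ofReal (‖z - u‖ ^ (-q))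
          ≤ ENNReal.ofReal (Real.sqrt (1 + ‖z‖ ^ 2) ^ (-t)) * ENNReal.ofReal (ρ ^ (-q)) :=
            mul_le_mul' (ENNReal.ofReal_le_ofReal (wce_W_mono hts z))
              (ENNReal.ofReal_le_ofReal haq)
        _ = ENNReal.ofReal (ρ ^ (-q)) * ENNReal.ofReal (Real.sqrt (1 + ‖z‖ ^ 2) ^ (-t)) :=
            mul_comm _ _
    calc ∫⁻ z : Eu in T₁ ∩ ball (0:Eu) (4*ρ), g z
        ≤ ∫⁻ z : Eu in T₁ ∩ ball (0:Eu) (4*ρ),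
            ENNReal.ofReal (ρ ^ (-q)) * ENNReal.ofReal (Real.sqrt (1 + ‖z‖ ^ 2) ^ (-t)) := hmono
      _ ≤ ∫⁻ z : Eu in ball (0:Eu) (4*ρ),
            ENNReal.ofReal (ρ ^ (-q)) * ENNReal.ofReal (Real.sqrt (1 + ‖z‖ ^ 2) ^ (-t)) :=
          lintegral_mono_set (fun z hz => hz.2)
      _ = ENNReal.ofReal (ρ ^ (-q)) * ∫⁻ z : Eu in ball (0:Eu) (4*ρ),
            ENNReal.ofReal (Real.sqrt (1 + ‖z‖ ^ 2) ^ (-t)) :=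
          lintegral_const_mul' _ _ ofReal_ne_top
      _ ≤ ENNReal.ofReal (ρ ^ (-q)) * ∫⁻ z : Eu in ball (0:Eu) (4*ρ),
            ENNReal.ofReal (‖z - 0‖ ^ (-t)) := by
          apply mul_le_mul_right
          apply setLIntegral_mono_ae (wce_measFu (0:Eu) t).aemeasurable
          have h0 : ∀ᵐ z : Eu ∂volume, z ≠ (0:Eu) :=
            ae_iff.mpr (by simpa using measure_singleton (0:Eu))
          filter_upwards [h0] with z hz _
          rw [sub_zero]
          exact ENNReal.ofReal_le_ofReal (wce_W_le_norm ht0 hz)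
      _ ≤ ENNReal.ofReal (ρ ^ (-q)) * (KP * ENNReal.ofReal ((4*ρ) ^ ((n:ℝ) - t))) :=
          mul_le_mul_right (hP 0 (4*ρ) (by linarith)) _
      _ = KP * ENNReal.ofReal (4 ^ ((n:ℝ) - t)) * ENNReal.ofReal (ρ ^ ((n:ℝ) - q - t)) := by
          rw [Real.mul_rpow (by norm_num) hρ0.le, ENNReal.ofReal_mul (by positivity),
            show (n:ℝ) - q - t = -q + ((n:ℝ) - t) by ring, Real.rpow_add hρ0,
            ENNReal.ofReal_mul (by positivity)]
          ring
  have hb1b : ∫⁻ z : Eu in T₁ \ ball (0:Eu) (4*ρ), g z ≤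
      ENNReal.ofReal (4 ^ q) * KQ * ENNReal.ofReal (4 ^ ((n:ℝ) - (t+q))) *
        ENNReal.ofReal (ρ ^ ((n:ℝ) - q - t)) := by
    have hmono : ∫⁻ z : Eu in T₁ \ ball (0:Eu) (4*ρ), g z ≤
        ∫⁻ z : Eu in T₁ \ ball (0:Eu) (4*ρ),
          ENNReal.ofReal (4 ^ q) * ENNReal.ofReal (‖z - 0‖ ^ (-(t + q))) := by
      have hmW : Measurable fun z : Eu =>
          ENNReal.ofReal (4 ^ q) * ENNReal.ofReal (‖z - 0‖ ^ (-(t + q))) :=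
        (wce_measFu (0:Eu) (t+q)).const_mul _
      apply setLIntegral_mono hmW
      intro z hz
      have haρ : ρ ≤ ‖z - u‖ := hmem z hz.1.1
      have hz2 : ‖z‖ ≤ 2 * ‖z - u‖ := hz.1.2
      have hz4 : 4 * ρ ≤ ‖z‖ := by
        have := hz.2
        rw [mem_ball, dist_zero_right, not_lt] at this
        exact this
      have hzpos : (0:ℝ) < ‖z‖ := by linarith
      have hjbpos := wce_jb_pos z
      have hjb4 : Real.sqrt (1 + ‖z‖ ^ 2) ≤ 4 * ‖z - u‖ := by
        have h1 := sqrt_one_add_norm_sq_le z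
        have h2 : (1:ℝ) ≤ 2 * ‖z - u‖ := by linarith
        linarith
      have haq : ‖z - u‖ ^ (-q) ≤ 4 ^ q * Real.sqrt (1 + ‖z‖ ^ 2) ^ (-q) := by
        have h1 : Real.sqrt (1 + ‖z‖ ^ 2) / 4 ≤ ‖z - u‖ := by linarith
        have h2 : (0:ℝ) < Real.sqrt (1 + ‖z‖ ^ 2) / 4 := by positivity
        calc ‖z - u‖ ^ (-q) ≤ (Real.sqrt (1 + ‖z‖ ^ 2) / 4) ^ (-q) :=
            Real.rpow_le_rpow_of_nonpos h2 h1 (neg_nonpos.mpr hq0)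
          _ = Real.sqrt (1 + ‖z‖ ^ 2) ^ (-q) / 4 ^ (-q) :=
            Real.div_rpow hjbpos.le (by norm_num) _
          _ = 4 ^ q * Real.sqrt (1 + ‖z‖ ^ 2) ^ (-q) := by
            rw [Real.rpow_neg (by norm_num : (0:ℝ) ≤ 4), div_eq_mul_inv, inv_inv]
            ring
      have hjbz : Real.sqrt (1 + ‖z‖ ^ 2) ^ (-(t+q)) ≤ ‖z‖ ^ (-(t+q)) :=
        wce_W_le_norm (by positivity) (norm_pos_iff.mp hzpos)
      rw [hg, sub_zero]
      calc ENNReal.ofReal (Real.sqrt (1 + ‖z‖ ^ 2) ^ (-s)) * ENNReal.ofReal (‖z - u‖ ^ (-q))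
          ≤ ENNReal.ofReal (Real.sqrt (1 + ‖z‖ ^ 2) ^ (-t)) *
            ENNReal.ofReal (4 ^ q * Real.sqrt (1 + ‖z‖ ^ 2) ^ (-q)) :=
            mul_le_mul' (ENNReal.ofReal_le_ofReal (wce_W_mono hts z))
              (ENNReal.ofReal_le_ofReal haq)
        _ = ENNReal.ofReal (4 ^ q) * ENNReal.ofReal (Real.sqrt (1 + ‖z‖ ^ 2) ^ (-(t + q))) := by
            rw [← ENNReal.ofReal_mul (by positivity), ← ENNReal.ofReal_mul (by positivity)]
            congr 1
            rw [neg_add, Real.rpow_add hjbpos]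
            ring
        _ ≤ ENNReal.ofReal (4 ^ q) * ENNReal.ofReal (‖z‖ ^ (-(t + q))) :=
            mul_le_mul_right (ENNReal.ofReal_le_ofReal hjbz) _
    calc ∫⁻ z : Eu in T₁ \ ball (0:Eu) (4*ρ), g z
        ≤ ∫⁻ z : Eu in T₁ \ ball (0:Eu) (4*ρ),
            ENNReal.ofReal (4 ^ q) * ENNReal.ofReal (‖z - 0‖ ^ (-(t + q))) := hmono
      _ ≤ ∫⁻ z : Eu in (ball (0:Eu) (4*ρ))ᶜ,
            ENNReal.ofReal (4 ^ q) * ENNReal.ofReal (‖z - 0‖ ^ (-(t + q))) :=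
          lintegral_mono_set (fun z hz => hz.2)
      _ = ENNReal.ofReal (4 ^ q) * ∫⁻ z : Eu in (ball (0:Eu) (4*ρ))ᶜ,
            ENNReal.ofReal (‖z - 0‖ ^ (-(t + q))) :=
          lintegral_const_mul' _ _ ofReal_ne_top
      _ ≤ ENNReal.ofReal (4 ^ q) * (KQ * ENNReal.ofReal ((4*ρ) ^ ((n:ℝ) - (t+q)))) :=
          mul_le_mul_right (hQ 0 (4*ρ) (by linarith)) _
      _ = ENNReal.ofReal (4 ^ q) * KQ * ENNReal.ofReal (4 ^ ((n:ℝ) - (t+q))) *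
            ENNReal.ofReal (ρ ^ ((n:ℝ) - q - t)) := by
          rw [Real.mul_rpow (by norm_num) hρ0.le, ENNReal.ofReal_mul (by positivity),
            show (n:ℝ) - (t+q) = (n:ℝ) - q - t by ring]
          ring
  calc ∫⁻ z : Eu in (ball u ρ)ᶜ, g z
      ≤ ∫⁻ z : Eu in T₂ ∪ ((T₁ ∩ ball (0:Eu) (4*ρ)) ∪ (T₁ \ ball (0:Eu) (4*ρ))), g z :=
        lintegral_mono_set cover
    _ ≤ (∫⁻ z : Eu in T₂, g z) +
        ∫⁻ z : Eu in (T₁ ∩ ball (0:Eu) (4*ρ)) ∪ (T₁ \ ball (0:Eu) (4*ρ)), g z :=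
        lintegral_union_le _ _ _
    _ ≤ (∫⁻ z : Eu in T₂, g z) + ((∫⁻ z : Eu in T₁ ∩ ball (0:Eu) (4*ρ), g z) +
        ∫⁻ z : Eu in T₁ \ ball (0:Eu) (4*ρ), g z) :=
        add_le_add_right (lintegral_union_le _ _ _) _
    _ ≤ KQ * ENNReal.ofReal (ρ ^ ((n:ℝ) - q - t)) +
        (KP * ENNReal.ofReal (4 ^ ((n:ℝ) - t)) * ENNReal.ofReal (ρ ^ ((n:ℝ) - q - t)) +
         ENNReal.ofReal (4 ^ q) * KQ * ENNReal.ofReal (4 ^ ((n:ℝ) - (t+q))) *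
           ENNReal.ofReal (ρ ^ ((n:ℝ) - q - t))) :=
        add_le_add hb2 (add_le_add hb1a hb1b)
    _ = _ := by ring

lemma wce_mul_split {k l a b : ℝ} (hk0 : 0 ≤ k) (hl0 : 0 ≤ l)
    (ha : 0 < a) (hb : 0 < b) :
    a ^ (-k) * b ^ (-l) ≤ a ^ (-(k+l)) + b ^ (-(k+l)) := by
  rcases le_total a b with h | h
  · calc a ^ (-k) * b ^ (-l) ≤ a ^ (-k) * a ^ (-l) := by
          apply mul_le_mul_of_nonneg_left _ (Real.rpow_nonneg ha.le _)
          exact Real.rpow_le_rpow_of_nonpos ha h (neg_nonpos.mpr hl0)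
      _ = a ^ (-(k+l)) := by rw [neg_add, Real.rpow_add ha]
      _ ≤ a ^ (-(k+l)) + b ^ (-(k+l)) := le_add_of_nonneg_right (Real.rpow_nonneg hb.le _)
  · calc a ^ (-k) * b ^ (-l) ≤ b ^ (-k) * b ^ (-l) := by
          apply mul_le_mul_of_nonneg_right _ (Real.rpow_nonneg hb.le _)
          exact Real.rpow_le_rpow_of_nonpos hb h (neg_nonpos.mpr hk0)
      _ = b ^ (-(k+l)) := by rw [neg_add, Real.rpow_add hb]
      _ ≤ a ^ (-(k+l)) + b ^ (-(k+l)) := le_add_of_nonneg_left (Real.rpow_nonneg ha.le _)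

lemma wce_G (hn : 0 < n) {s σ : ℝ} (hs0 : 0 < s) (hσ0 : 0 < σ) (hσn : σ < n)
    (hσs : (n:ℝ) < σ + s) :
    ∃ K : ℝ≥0∞, K ≠ ∞ ∧ ∀ u : Eu,
      ∫⁻ z : Eu, ENNReal.ofReal (Real.sqrt (1 + ‖z‖ ^ 2) ^ (-s)) *
        ENNReal.ofReal (‖z - u‖ ^ (-σ)) ≤ K := by
  set lo : ℝ := max ((n:ℝ) - σ) 0 with hlo
  set hi : ℝ := min s (n:ℝ) with hhi
  have hlohi : lo < hi := by
    rw [hlo, hhi, max_lt_iff, lt_min_iff, lt_min_iff]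
    have h0n : (0:ℝ) < n := by exact_mod_cast hn
    exact ⟨⟨by linarith, by linarith⟩, ⟨hs0, h0n⟩⟩
  set t : ℝ := (lo + hi) / 2 with ht
  have hlt : lo < t := by rw [ht]; linarith
  have hth : t < hi := by rw [ht]; linarith
  have ht0 : 0 ≤ t := le_of_lt (lt_of_le_of_lt (le_max_right _ _) hlt)
  have hts : t ≤ s := le_of_lt (lt_of_lt_of_le hth (min_le_left _ _))
  have htn : t < n := lt_of_lt_of_le hth (min_le_right _ _)
  have htσ : (n:ℝ) < σ + t := by
    have : (n:ℝ) - σ ≤ lo := le_max_left _ _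
    linarith
  obtain ⟨KR, hKR, hR⟩ := wce_R hn hs0 hσ0.le ht0 hts htn htσ
  obtain ⟨KP, hKP, hP⟩ := lintegral_ball_rpow hn hσ0.le hσn
  refine ⟨KP * ENNReal.ofReal (1 ^ ((n:ℝ) - σ)) + KR * ENNReal.ofReal (1 ^ ((n:ℝ) - σ - t)),
    ENNReal.add_ne_top.mpr ⟨ENNReal.mul_ne_top hKP ofReal_ne_top,
      ENNReal.mul_ne_top hKR ofReal_ne_top⟩, fun u => ?_⟩
  set g : Eu → ℝ≥0∞ := fun z =>
    ENNReal.ofReal (Real.sqrt (1 + ‖z‖ ^ 2) ^ (-s)) * ENNReal.ofReal (‖z - u‖ ^ (-σ)) with hg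
  have hsplit : ∫⁻ z : Eu, g z ≤
      (∫⁻ z : Eu in ball u 1, g z) + ∫⁻ z : Eu in (ball u 1)ᶜ, g z := by
    calc ∫⁻ z : Eu, g z = ∫⁻ z : Eu in ball u 1 ∪ (ball u 1)ᶜ, g z := by
          rw [union_compl_self, setLIntegral_univ]
      _ ≤ _ := lintegral_union_le _ _ _
  apply le_trans hsplit
  apply add_le_add
  · calc ∫⁻ z : Eu in ball u 1, g z
        ≤ ∫⁻ z : Eu in ball u 1, ENNReal.ofReal (‖z - u‖ ^ (-σ)) := by
          apply setLIntegral_mono (wce_measFu u σ)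
          intro z _
          rw [hg]
          calc ENNReal.ofReal (Real.sqrt (1 + ‖z‖ ^ 2) ^ (-s)) * ENNReal.ofReal (‖z - u‖ ^ (-σ))
              ≤ 1 * ENNReal.ofReal (‖z - u‖ ^ (-σ)) :=
                mul_le_mul_left (ENNReal.ofReal_le_one.mpr (wce_W_le_one hs0.le z)) _
            _ = ENNReal.ofReal (‖z - u‖ ^ (-σ)) := one_mul _
      _ ≤ KP * ENNReal.ofReal (1 ^ ((n:ℝ) - σ)) := hP u 1 one_pos
  · exact hR u 1 (by norm_num)

lemma wce_INF (hn : 0 < n) {s σ k l : ℝ} (hs0 : 0 ≤ s) (hσ : (n:ℝ) < σ)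
    (hk0 : 0 ≤ k) (hl0 : 0 ≤ l) (hkl : k + l = σ) (u : EuclideanSpace ℝ (Fin n)) :
    ∫⁻ z : Eu, ENNReal.ofReal
        (Real.sqrt (1 + ‖z‖ ^ 2) ^ (-s) / (‖z - u‖ ^ k * ‖z - u‖ ^ l)) = ∞ := by
  haveI := eu_nontrivial hn
  classical
  set μB : ℝ≥0∞ := volume (ball (0 : Eu) 1) with hμB
  have hμBfin : μB ≠ ∞ := measure_ball_lt_top.ne
  have hμBpos : 0 < μB := measure_ball_pos _ _ one_pos
  set M : ℝ := Real.sqrt (1 + (‖u‖ + 1) ^ 2) with hM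
  have hMpos : 0 < M := by rw [hM]; positivity
  set c : ℝ := (2:ℝ)⁻¹ with hc
  have hc0 : 0 < c := by norm_num
  set q1 : ℝ := c ^ ((n:ℝ) - σ) with hq1
  have hq1gt : 1 < q1 := by
    rw [hq1]
    rcases Real.one_lt_rpow_iff_of_pos hc0 with h
    exact h.mpr (Or.inr ⟨by norm_num, by linarith⟩)
  set I : ℝ≥0∞ := ∫⁻ z : Eu, ENNReal.ofReal
      (Real.sqrt (1 + ‖z‖ ^ 2) ^ (-s) / (‖z - u‖ ^ k * ‖z - u‖ ^ l)) with hI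
  have key : ∀ j : ℕ, ENNReal.ofReal (M ^ (-s) * (1 - c ^ (n:ℕ)) * q1 ^ j) * μB ≤ I := by
    intro j
    set r₁ : ℝ := c ^ j with hr₁
    set r₂ : ℝ := c ^ (j+1) with hr₂
    have hr₁0 : 0 < r₁ := by positivity
    have hr₂0 : 0 < r₂ := by positivity
    have hr21 : r₂ < r₁ := by
      have hc1 : c < 1 := by rw [hc]; norm_num
      rw [hr₁, hr₂, pow_succ]
      nlinarith [pow_pos hc0 j]
    have hr₁1 : r₁ ≤ 1 := pow_le_one₀ hc0.le (by norm_num)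
    set A : Set (EuclideanSpace ℝ (Fin n)) := ball u r₁ \ ball u r₂ with hA
    have hmu : ENNReal.ofReal (r₁ ^ (n:ℕ) - r₂ ^ (n:ℕ)) * μB ≤ volume A := by
      have hd : volume A = volume (ball u r₁) - volume (ball u r₂) :=
        measure_diff (ball_subset_ball hr21.le) measurableSet_ball.nullMeasurableSet
          measure_ball_lt_top.ne
      rw [hd, Measure.addHaar_ball volume u hr₁0.le, Measure.addHaar_ball volume u hr₂0.le,
        finrank_euclideanSpace_fin, ← ENNReal.sub_mul (fun _ _ => hμBfin),
        ← ENNReal.ofReal_sub _ (by positivity)]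
    have hlow : ∀ z ∈ A, ENNReal.ofReal (M ^ (-s) * r₁ ^ (-σ)) ≤ ENNReal.ofReal
        (Real.sqrt (1 + ‖z‖ ^ 2) ^ (-s) / (‖z - u‖ ^ k * ‖z - u‖ ^ l)) := by
      intro z hz
      have hza : ‖z - u‖ < r₁ := by
        have := hz.1; rwa [mem_ball, dist_eq_norm] at this
      have hzb : r₂ ≤ ‖z - u‖ := by
        have := hz.2; rw [mem_ball, dist_eq_norm, not_lt] at this; exact this
      have hapos : 0 < ‖z - u‖ := lt_of_lt_of_le hr₂0 hzb
      have hjbM : Real.sqrt (1 + ‖z‖ ^ 2) ≤ M := by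
        rw [hM]
        apply Real.sqrt_le_sqrt
        have h1 : ‖z‖ ≤ ‖u‖ + 1 := by
          calc ‖z‖ = ‖z - u + u‖ := by rw [sub_add_cancel]
            _ ≤ ‖z - u‖ + ‖u‖ := norm_add_le _ _
            _ ≤ ‖u‖ + 1 := by nlinarith [hza, hr₁1]
        nlinarith [norm_nonneg z]
      apply ENNReal.ofReal_le_ofReal
      have heq : Real.sqrt (1 + ‖z‖ ^ 2) ^ (-s) / (‖z - u‖ ^ k * ‖z - u‖ ^ l)
          = Real.sqrt (1 + ‖z‖ ^ 2) ^ (-s) * ‖z - u‖ ^ (-σ) := by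
        rw [← Real.rpow_add hapos, hkl, div_eq_mul_inv, ← Real.rpow_neg (norm_nonneg _)]
      rw [heq]
      apply mul_le_mul
      · exact Real.rpow_le_rpow_of_nonpos (wce_jb_pos z) hjbM (neg_nonpos.mpr hs0)
      · exact Real.rpow_le_rpow_of_nonpos hapos hza.le
          (neg_nonpos.mpr (by linarith : (0:ℝ) ≤ σ))
      · positivity
      · positivity
    have hcalc : ENNReal.ofReal (M ^ (-s) * r₁ ^ (-σ)) * (ENNReal.ofReal (r₁ ^ (n:ℕ) - r₂ ^ (n:ℕ)) * μB) =
        ENNReal.ofReal (M ^ (-s) * (1 - c ^ (n:ℕ)) * q1 ^ j) * μB := by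
      rw [← mul_assoc, ← ENNReal.ofReal_mul (by positivity)]
      congr 2
      have h1 : r₂ ^ (n:ℕ) = r₁ ^ (n:ℕ) * c ^ (n:ℕ) := by
        rw [hr₁, hr₂, pow_succ, mul_pow]
      have h2 : r₁ ^ (-σ) * r₁ ^ (n:ℕ) = q1 ^ j := by
        rw [hq1, hr₁, ← Real.rpow_natCast c j, ← Real.rpow_natCast (c ^ ((n:ℝ) - σ)) j,
          ← Real.rpow_mul hc0.le, ← Real.rpow_mul hc0.le,
          ← Real.rpow_natCast (c ^ ((j:ℕ):ℝ)) n, ← Real.rpow_mul hc0.le,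
          ← Real.rpow_add hc0]
        congr 1
        ring
      calc M ^ (-s) * r₁ ^ (-σ) * (r₁ ^ (n:ℕ) - r₂ ^ (n:ℕ))
          = M ^ (-s) * ((r₁ ^ (-σ) * r₁ ^ (n:ℕ)) * (1 - c ^ (n:ℕ))) := by rw [h1]; ring
        _ = M ^ (-s) * (1 - c ^ (n:ℕ)) * q1 ^ j := by rw [h2]; ring
    calc ENNReal.ofReal (M ^ (-s) * (1 - c ^ (n:ℕ)) * q1 ^ j) * μB
        = ENNReal.ofReal (M ^ (-s) * r₁ ^ (-σ)) * (ENNReal.ofReal (r₁ ^ (n:ℕ) - r₂ ^ (n:ℕ)) * μB) :=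
          hcalc.symm
      _ ≤ ENNReal.ofReal (M ^ (-s) * r₁ ^ (-σ)) * volume A := mul_le_mul_right hmu _
      _ = ∫⁻ _ : Eu in A, ENNReal.ofReal (M ^ (-s) * r₁ ^ (-σ)) := (setLIntegral_const _ _).symm
      _ ≤ ∫⁻ z : Eu in A, ENNReal.ofReal
            (Real.sqrt (1 + ‖z‖ ^ 2) ^ (-s) / (‖z - u‖ ^ k * ‖z - u‖ ^ l)) := by
          apply setLIntegral_mono (by fun_prop) hlow
      _ ≤ I := setLIntegral_le_lintegral _ _
  by_contra hne
  have hIfin : I ≠ ∞ := hne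
  have hcn : (0:ℝ) < 1 - c ^ (n:ℕ) := by
    have : c ^ (n:ℕ) < 1 := pow_lt_one₀ hc0.le (by norm_num) (by omega)
    linarith
  set c' : ℝ := (M ^ (-s) * (1 - c ^ (n:ℕ))) * μB.toReal with hc'
  have hc'pos : 0 < c' := by
    have h1 : 0 < μB.toReal := ENNReal.toReal_pos hμBpos.ne' hμBfin
    rw [hc']
    exact mul_pos (mul_pos (Real.rpow_pos_of_pos hMpos (-s)) hcn) h1
  have hub : ∀ j : ℕ, q1 ^ j * c' ≤ I.toReal := by
    intro j
    have h := key j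
    have h2 := ENNReal.toReal_mono hIfin h
    rw [ENNReal.toReal_mul, ENNReal.toReal_ofReal (by positivity)] at h2
    calc q1 ^ j * c' = M ^ (-s) * (1 - c ^ (n:ℕ)) * q1 ^ j * μB.toReal := by rw [hc']; ring
      _ ≤ I.toReal := h2
  obtain ⟨j, hj⟩ := pow_unbounded_of_one_lt (I.toReal / c') hq1gt
  have := hub j
  rw [div_lt_iff₀ hc'pos] at hj
  linarith

lemma wce_F_eq (s k l : ℝ) (u₁ u₂ z : Eu) :
    ENNReal.ofReal (Real.sqrt (1 + ‖z‖ ^ 2) ^ (-s) / (‖z - u₁‖ ^ k * ‖z - u₂‖ ^ l))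
      = ENNReal.ofReal (Real.sqrt (1 + ‖z‖ ^ 2) ^ (-s)) *
        ENNReal.ofReal (‖z - u₁‖ ^ (-k)) * ENNReal.ofReal (‖z - u₂‖ ^ (-l)) := by
  rw [div_eq_mul_inv, mul_inv, ← Real.rpow_neg (norm_nonneg _), ← Real.rpow_neg (norm_nonneg _),
    ← mul_assoc, ENNReal.ofReal_mul (by positivity), ENNReal.ofReal_mul (by positivity)]

lemma wce_pick_t {lo hi a1 a2 : ℝ} (h : lo < hi) :
    ∃ t : ℝ, lo < t ∧ t < hi ∧ t ≠ a1 ∧ t ≠ a2 := by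
  set x := lo + (hi - lo)/4 with hxd
  set y := lo + (hi - lo)/2 with hyd
  set z := lo + 3*(hi - lo)/4 with hzd
  have hlox : lo < x := by rw [hxd]; linarith
  have hxy : x < y := by rw [hxd, hyd]; linarith
  have hyz : y < z := by rw [hyd, hzd]; linarith
  have hzhi : z < hi := by rw [hzd]; linarith
  by_cases hx : x ≠ a1 ∧ x ≠ a2
  · exact ⟨x, hlox, lt_trans (lt_trans hxy hyz) hzhi, hx.1, hx.2⟩
  by_cases hy : y ≠ a1 ∧ y ≠ a2
  · exact ⟨y, lt_trans hlox hxy, lt_trans hyz hzhi, hy.1, hy.2⟩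
  push_neg at hx hy
  refine ⟨z, lt_trans (lt_trans hlox hxy) hyz, hzhi, ?_, ?_⟩
  · intro hz
    rcases em (x = a1) with h1 | h1
    · linarith
    · have h2 := hx h1
      rcases em (y = a1) with h3 | h3
      · linarith
      · have h4 := hy h3
        linarith
  · intro hz
    rcases em (x = a1) with h1 | h1
    · rcases em (y = a1) with h3 | h3
      · linarith
      · have h4 := hy h3
        linarith
    · have h2 := hx h1
      linarith

lemma wce_triangle (u₁ u₂ z : Eu) : ‖u₁ - u₂‖ ≤ ‖z - u₁‖ + ‖z - u₂‖ := by
  have h : u₁ - u₂ = (z - u₂) - (z - u₁) := by abel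
  rw [h]
  calc ‖(z - u₂) - (z - u₁)‖ ≤ ‖z - u₂‖ + ‖z - u₁‖ := norm_sub_le _ _
    _ = ‖z - u₁‖ + ‖z - u₂‖ := add_comm _ _

lemma wce_A2 (hn : 0 < n) {s k l : ℝ} (hs0 : 0 < s) (hk0 : 0 ≤ k) (hkn : k < n)
    (hl0 : 0 ≤ l) (hln : l < n) (hσn : (n:ℝ) < k + l) :
    ∃ K : ℝ≥0∞, K ≠ ∞ ∧ ∀ u₁ u₂ : EuclideanSpace ℝ (Fin n), 0 < ‖u₁ - u₂‖ →
      ∫⁻ z : Eu, ENNReal.ofReal (Real.sqrt (1 + ‖z‖ ^ 2) ^ (-s)) *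
          ENNReal.ofReal (‖z - u₁‖ ^ (-k)) * ENNReal.ofReal (‖z - u₂‖ ^ (-l))
        ≤ K * ENNReal.ofReal (‖u₁ - u₂‖ ^ ((n:ℝ) - (k + l))) := by
  obtain ⟨KPk, hKPk, hPk⟩ := lintegral_ball_rpow hn hk0 hkn
  obtain ⟨KPl, hKPl, hPl⟩ := lintegral_ball_rpow hn hl0 hln
  obtain ⟨KQ, hKQ, hQ⟩ := lintegral_compl_ball_rpow hn hσn
  set c2 : ℝ≥0∞ := ENNReal.ofReal (((2:ℝ) ^ ((n:ℝ) - (k + l)))⁻¹) with hc2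
  refine ⟨(KPk + KPl + (KQ + KQ)) * c2, ?_, ?_⟩
  · apply ENNReal.mul_ne_top _ ofReal_ne_top
    refine ENNReal.add_ne_top.mpr ⟨ENNReal.add_ne_top.mpr ⟨hKPk, hKPl⟩,
      ENNReal.add_ne_top.mpr ⟨hKQ, hKQ⟩⟩
  intro u₁ u₂ hd0
  set d : ℝ := ‖u₁ - u₂‖ with hdd
  set ρ : ℝ := d / 2 with hρd
  have hρ0 : 0 < ρ := by rw [hρd]; linarith
  set W : Eu → ℝ≥0∞ := fun z => ENNReal.ofReal (Real.sqrt (1 + ‖z‖ ^ 2) ^ (-s)) with hW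
  set g : Eu → ℝ≥0∞ := fun z =>
    W z * ENNReal.ofReal (‖z - u₁‖ ^ (-k)) * ENNReal.ofReal (‖z - u₂‖ ^ (-l)) with hg
  set B₁ : Set (EuclideanSpace ℝ (Fin n)) := ball u₁ ρ with hB₁
  set B₂ : Set (EuclideanSpace ℝ (Fin n)) := ball u₂ ρ with hB₂
  have hWle : ∀ z : Eu, W z ≤ 1 := fun z =>
    ENNReal.ofReal_le_one.mpr (wce_W_le_one hs0.le z)
  have hb2ρ : ∀ z ∈ B₁, ρ ≤ ‖z - u₂‖ := by
    intro z hz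
    have h1 : ‖z - u₁‖ < ρ := by
      have := hz; rwa [hB₁, mem_ball, dist_eq_norm] at this
    have h2 := wce_triangle u₁ u₂ z
    have : d ≤ ‖z - u₁‖ + ‖z - u₂‖ := h2
    rw [hρd] at *; linarith
  have hb1ρ : ∀ z ∈ B₂, ρ ≤ ‖z - u₁‖ := by
    intro z hz
    have h1 : ‖z - u₂‖ < ρ := by
      have := hz; rwa [hB₂, mem_ball, dist_eq_norm] at this
    have h2 := wce_triangle u₁ u₂ z
    rw [hρd] at *; linarith
  -- piece B₁
  have hpiece1 : ∫⁻ z : Eu in B₁, g z ≤ KPk * ENNReal.ofReal (ρ ^ ((n:ℝ) - (k + l))) := by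
    calc ∫⁻ z : Eu in B₁, g z
        ≤ ∫⁻ z : Eu in B₁, ENNReal.ofReal (ρ ^ (-l)) * ENNReal.ofReal (‖z - u₁‖ ^ (-k)) := by
          apply setLIntegral_mono ((wce_measFu u₁ k).const_mul _)
          intro z hz
          rw [hg]
          calc W z * ENNReal.ofReal (‖z - u₁‖ ^ (-k)) * ENNReal.ofReal (‖z - u₂‖ ^ (-l))
              ≤ 1 * ENNReal.ofReal (‖z - u₁‖ ^ (-k)) * ENNReal.ofReal (ρ ^ (-l)) := by
                apply mul_le_mul'
                · exact mul_le_mul_left (hWle z) _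
                · exact ENNReal.ofReal_le_ofReal
                    (Real.rpow_le_rpow_of_nonpos hρ0 (hb2ρ z hz) (neg_nonpos.mpr hl0))
            _ = ENNReal.ofReal (ρ ^ (-l)) * ENNReal.ofReal (‖z - u₁‖ ^ (-k)) := by ring
      _ = ENNReal.ofReal (ρ ^ (-l)) * ∫⁻ z : Eu in B₁, ENNReal.ofReal (‖z - u₁‖ ^ (-k)) :=
          lintegral_const_mul' _ _ ofReal_ne_top
      _ ≤ ENNReal.ofReal (ρ ^ (-l)) * (KPk * ENNReal.ofReal (ρ ^ ((n:ℝ) - k))) :=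
          mul_le_mul_right (hPk u₁ ρ hρ0) _
      _ = KPk * ENNReal.ofReal (ρ ^ ((n:ℝ) - (k + l))) := by
          rw [← mul_assoc, mul_comm (ENNReal.ofReal (ρ ^ (-l))) KPk, mul_assoc,
            ← ENNReal.ofReal_mul (by positivity), ← Real.rpow_add hρ0,
            show -l + ((n:ℝ) - k) = (n:ℝ) - (k + l) by ring]
  -- piece B₂
  have hpiece2 : ∫⁻ z : Eu in B₂, g z ≤ KPl * ENNReal.ofReal (ρ ^ ((n:ℝ) - (k + l))) := by
    calc ∫⁻ z : Eu in B₂, g z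
        ≤ ∫⁻ z : Eu in B₂, ENNReal.ofReal (ρ ^ (-k)) * ENNReal.ofReal (‖z - u₂‖ ^ (-l)) := by
          apply setLIntegral_mono ((wce_measFu u₂ l).const_mul _)
          intro z hz
          rw [hg]
          calc W z * ENNReal.ofReal (‖z - u₁‖ ^ (-k)) * ENNReal.ofReal (‖z - u₂‖ ^ (-l))
              ≤ 1 * ENNReal.ofReal (ρ ^ (-k)) * ENNReal.ofReal (‖z - u₂‖ ^ (-l)) := by
                apply mul_le_mul'
                · apply mul_le_mul' (hWle z)
                  exact ENNReal.ofReal_le_ofReal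
                    (Real.rpow_le_rpow_of_nonpos hρ0 (hb1ρ z hz) (neg_nonpos.mpr hk0))
                · exact le_refl _
            _ = ENNReal.ofReal (ρ ^ (-k)) * ENNReal.ofReal (‖z - u₂‖ ^ (-l)) := by ring
      _ = ENNReal.ofReal (ρ ^ (-k)) * ∫⁻ z : Eu in B₂, ENNReal.ofReal (‖z - u₂‖ ^ (-l)) :=
          lintegral_const_mul' _ _ ofReal_ne_top
      _ ≤ ENNReal.ofReal (ρ ^ (-k)) * (KPl * ENNReal.ofReal (ρ ^ ((n:ℝ) - l))) :=
          mul_le_mul_right (hPl u₂ ρ hρ0) _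
      _ = KPl * ENNReal.ofReal (ρ ^ ((n:ℝ) - (k + l))) := by
          rw [← mul_assoc, mul_comm (ENNReal.ofReal (ρ ^ (-k))) KPl, mul_assoc,
            ← ENNReal.ofReal_mul (by positivity), ← Real.rpow_add hρ0,
            show -k + ((n:ℝ) - l) = (n:ℝ) - (k + l) by ring]
  -- piece rest
  have hpiece3 : ∫⁻ z : Eu in (B₁ ∪ B₂)ᶜ, g z ≤
      (KQ + KQ) * ENNReal.ofReal (ρ ^ ((n:ℝ) - (k + l))) := by
    have hmono : ∫⁻ z : Eu in (B₁ ∪ B₂)ᶜ, g z ≤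
        ∫⁻ z : Eu in (B₁ ∪ B₂)ᶜ,
          (ENNReal.ofReal (‖z - u₁‖ ^ (-(k+l))) + ENNReal.ofReal (‖z - u₂‖ ^ (-(k+l)))) := by
      apply setLIntegral_mono ((wce_measFu u₁ (k+l)).add (wce_measFu u₂ (k+l)))
      intro z hz
      have ha : ρ ≤ ‖z - u₁‖ := by
        have h1 : z ∉ B₁ := fun h => hz (Or.inl h)
        rw [hB₁, mem_ball, dist_eq_norm, not_lt] at h1
        exact h1
      have hb : ρ ≤ ‖z - u₂‖ := by
        have h1 : z ∉ B₂ := fun h => hz (Or.inr h)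
        rw [hB₂, mem_ball, dist_eq_norm, not_lt] at h1
        exact h1
      have hsplit := wce_mul_split hk0 hl0 (lt_of_lt_of_le hρ0 ha) (lt_of_lt_of_le hρ0 hb)
      rw [hg]
      calc W z * ENNReal.ofReal (‖z - u₁‖ ^ (-k)) * ENNReal.ofReal (‖z - u₂‖ ^ (-l))
          ≤ 1 * ENNReal.ofReal (‖z - u₁‖ ^ (-k)) * ENNReal.ofReal (‖z - u₂‖ ^ (-l)) :=
            mul_le_mul_left (mul_le_mul_left (hWle z) _) _
        _ = ENNReal.ofReal (‖z - u₁‖ ^ (-k) * ‖z - u₂‖ ^ (-l)) := by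
            rw [one_mul, ← ENNReal.ofReal_mul (by positivity)]
        _ ≤ ENNReal.ofReal (‖z - u₁‖ ^ (-(k+l)) + ‖z - u₂‖ ^ (-(k+l))) :=
            ENNReal.ofReal_le_ofReal hsplit
        _ = ENNReal.ofReal (‖z - u₁‖ ^ (-(k+l))) + ENNReal.ofReal (‖z - u₂‖ ^ (-(k+l))) :=
            ENNReal.ofReal_add (by positivity) (by positivity)
    apply le_trans hmono
    calc ∫⁻ z : Eu in (B₁ ∪ B₂)ᶜ,
          (ENNReal.ofReal (‖z - u₁‖ ^ (-(k+l))) + ENNReal.ofReal (‖z - u₂‖ ^ (-(k+l))))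
        = (∫⁻ z : Eu in (B₁ ∪ B₂)ᶜ, ENNReal.ofReal (‖z - u₁‖ ^ (-(k+l)))) +
          ∫⁻ z : Eu in (B₁ ∪ B₂)ᶜ, ENNReal.ofReal (‖z - u₂‖ ^ (-(k+l))) :=
          lintegral_add_left (wce_measFu u₁ (k+l)) _
      _ ≤ (∫⁻ z : Eu in (ball u₁ ρ)ᶜ, ENNReal.ofReal (‖z - u₁‖ ^ (-(k+l)))) +
          ∫⁻ z : Eu in (ball u₂ ρ)ᶜ, ENNReal.ofReal (‖z - u₂‖ ^ (-(k+l))) := by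
          apply add_le_add <;> apply lintegral_mono_set <;>
            · apply compl_subset_compl.mpr
              first | exact subset_union_left | exact subset_union_right
      _ ≤ KQ * ENNReal.ofReal (ρ ^ ((n:ℝ) - (k+l))) + KQ * ENNReal.ofReal (ρ ^ ((n:ℝ) - (k+l))) :=
          add_le_add (hQ u₁ ρ hρ0) (hQ u₂ ρ hρ0)
      _ = (KQ + KQ) * ENNReal.ofReal (ρ ^ ((n:ℝ) - (k+l))) := by ring
  have hcover : (univ : Set (EuclideanSpace ℝ (Fin n))) ⊆ B₁ ∪ (B₂ ∪ (B₁ ∪ B₂)ᶜ) := by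
    intro z _
    by_cases h1 : z ∈ B₁
    · exact Or.inl h1
    by_cases h2 : z ∈ B₂
    · exact Or.inr (Or.inl h2)
    · exact Or.inr (Or.inr (fun h => h.elim h1 h2))
  have hρdd : ENNReal.ofReal (ρ ^ ((n:ℝ) - (k + l))) =
      c2 * ENNReal.ofReal (d ^ ((n:ℝ) - (k + l))) := by
    rw [hc2, hρd, Real.div_rpow hd0.le (by norm_num), div_eq_mul_inv, mul_comm,
      ENNReal.ofReal_mul (by positivity)]
  calc ∫⁻ z : Eu, g z = ∫⁻ z : Eu in univ, g z := (setLIntegral_univ _).symm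
    _ ≤ ∫⁻ z : Eu in B₁ ∪ (B₂ ∪ (B₁ ∪ B₂)ᶜ), g z := lintegral_mono_set hcover
    _ ≤ (∫⁻ z : Eu in B₁, g z) + ((∫⁻ z : Eu in B₂, g z) + ∫⁻ z : Eu in (B₁ ∪ B₂)ᶜ, g z) :=
        le_trans (lintegral_union_le _ _ _) (add_le_add_right (lintegral_union_le _ _ _) _)
    _ ≤ KPk * ENNReal.ofReal (ρ ^ ((n:ℝ) - (k + l))) +
        (KPl * ENNReal.ofReal (ρ ^ ((n:ℝ) - (k + l))) +
         (KQ + KQ) * ENNReal.ofReal (ρ ^ ((n:ℝ) - (k + l)))) :=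
        add_le_add hpiece1 (add_le_add hpiece2 hpiece3)
    _ = (KPk + KPl + (KQ + KQ)) * ENNReal.ofReal (ρ ^ ((n:ℝ) - (k + l))) := by ring
    _ = (KPk + KPl + (KQ + KQ)) * c2 * ENNReal.ofReal (d ^ ((n:ℝ) - (k + l))) := by
        rw [hρdd]; ring

lemma wce_B (hn : 0 < n) {s k l m t : ℝ} (hs0 : 0 < s) (hk0 : 0 ≤ k) (hkn : k < n)
    (hl0 : 0 ≤ l) (hln : l < n) (ht0 : 0 ≤ t) (hts : t ≤ s) (htn : t < n)
    (htk : t + k ≠ (n:ℝ)) (htl : t + l ≠ (n:ℝ)) (hσt : (n:ℝ) < (k + l) + t)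
    (hx1 : -l + max ((n:ℝ) - k - t) 0 ≤ -m) (hx2 : -k + max ((n:ℝ) - l - t) 0 ≤ -m)
    (hx3 : (n:ℝ) - (k + l) - t ≤ -m) :
    ∃ K : ℝ≥0∞, K ≠ ∞ ∧ ∀ u₁ u₂ : EuclideanSpace ℝ (Fin n), 1 < ‖u₁ - u₂‖ →
      ∫⁻ z : Eu, ENNReal.ofReal (Real.sqrt (1 + ‖z‖ ^ 2) ^ (-s)) *
          ENNReal.ofReal (‖z - u₁‖ ^ (-k)) * ENNReal.ofReal (‖z - u₂‖ ^ (-l))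
        ≤ K * ENNReal.ofReal (‖u₁ - u₂‖ ^ (-m)) := by
  obtain ⟨KUk, hKUk, hUk⟩ := wce_U hn hs0 hk0 hkn ht0 hts htk
  obtain ⟨KUl, hKUl, hUl⟩ := wce_U hn hs0 hl0 hln ht0 hts htl
  obtain ⟨KR, hKR, hRR⟩ := wce_R hn hs0 (by linarith : (0:ℝ) ≤ k + l) ht0 hts htn hσt
  set x1 : ℝ := -l + max ((n:ℝ) - k - t) 0 with hx1d
  set x2 : ℝ := -k + max ((n:ℝ) - l - t) 0 with hx2d
  set x3 : ℝ := (n:ℝ) - (k + l) - t with hx3d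
  refine ⟨KUk * ENNReal.ofReal (2 ^ (-x1)) + KUl * ENNReal.ofReal (2 ^ (-x2)) +
      (KR * ENNReal.ofReal (2 ^ (-x3)) + KR * ENNReal.ofReal (2 ^ (-x3))), ?_, ?_⟩
  · refine ENNReal.add_ne_top.mpr ⟨ENNReal.add_ne_top.mpr ⟨?_, ?_⟩,
      ENNReal.add_ne_top.mpr ⟨?_, ?_⟩⟩ <;> exact ENNReal.mul_ne_top (by assumption) ofReal_ne_top
  intro u₁ u₂ hd1
  set d : ℝ := ‖u₁ - u₂‖ with hdd
  have hd0 : 0 < d := by linarith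
  set ρ : ℝ := d / 2 with hρd
  have hρ0 : 0 < ρ := by rw [hρd]; linarith
  have hρh : 1/2 ≤ ρ := by rw [hρd]; linarith
  have hpow : ∀ x : ℝ, x ≤ -m →
      ENNReal.ofReal (ρ ^ x) ≤ ENNReal.ofReal (2 ^ (-x)) * ENNReal.ofReal (d ^ (-m)) := by
    intro x hx
    rw [← ENNReal.ofReal_mul (by positivity)]
    apply ENNReal.ofReal_le_ofReal
    calc ρ ^ x = d ^ x * 2 ^ (-x) := by
          rw [hρd, Real.div_rpow hd0.le (by norm_num), Real.rpow_neg (by norm_num : (0:ℝ) ≤ 2),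
            div_eq_mul_inv]
      _ ≤ d ^ (-m) * 2 ^ (-x) := by
          apply mul_le_mul_of_nonneg_right _ (Real.rpow_nonneg (by norm_num) _)
          exact Real.rpow_le_rpow_of_exponent_le (by linarith) hx
      _ = 2 ^ (-x) * d ^ (-m) := mul_comm _ _
  set W : Eu → ℝ≥0∞ := fun z => ENNReal.ofReal (Real.sqrt (1 + ‖z‖ ^ 2) ^ (-s)) with hW
  set g : Eu → ℝ≥0∞ := fun z =>
    W z * ENNReal.ofReal (‖z - u₁‖ ^ (-k)) * ENNReal.ofReal (‖z - u₂‖ ^ (-l)) with hg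
  set B₁ : Set (EuclideanSpace ℝ (Fin n)) := ball u₁ ρ with hB₁
  set B₂ : Set (EuclideanSpace ℝ (Fin n)) := ball u₂ ρ with hB₂
  have hb2ρ : ∀ z ∈ B₁, ρ ≤ ‖z - u₂‖ := by
    intro z hz
    have h1 : ‖z - u₁‖ < ρ := by
      have := hz; rwa [hB₁, mem_ball, dist_eq_norm] at this
    have h2 := wce_triangle u₁ u₂ z
    rw [hρd] at *; linarith
  have hb1ρ : ∀ z ∈ B₂, ρ ≤ ‖z - u₁‖ := by
    intro z hz
    have h1 : ‖z - u₂‖ < ρ := by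
      have := hz; rwa [hB₂, mem_ball, dist_eq_norm] at this
    have h2 := wce_triangle u₁ u₂ z
    rw [hρd] at *; linarith
  have hpiece1 : ∫⁻ z : Eu in B₁, g z ≤
      KUk * ENNReal.ofReal (2 ^ (-x1)) * ENNReal.ofReal (d ^ (-m)) := by
    calc ∫⁻ z : Eu in B₁, g z
        ≤ ∫⁻ z : Eu in B₁, ENNReal.ofReal (ρ ^ (-l)) *
            (W z * ENNReal.ofReal (‖z - u₁‖ ^ (-k))) := by
          apply setLIntegral_mono (((wce_measW s).mul (wce_measFu u₁ k)).const_mul _)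
          intro z hz
          rw [hg]
          calc W z * ENNReal.ofReal (‖z - u₁‖ ^ (-k)) * ENNReal.ofReal (‖z - u₂‖ ^ (-l))
              ≤ W z * ENNReal.ofReal (‖z - u₁‖ ^ (-k)) * ENNReal.ofReal (ρ ^ (-l)) := by
                apply mul_le_mul_right
                exact ENNReal.ofReal_le_ofReal
                  (Real.rpow_le_rpow_of_nonpos hρ0 (hb2ρ z hz) (neg_nonpos.mpr hl0))
            _ = ENNReal.ofReal (ρ ^ (-l)) * (W z * ENNReal.ofReal (‖z - u₁‖ ^ (-k))) := by
                ring
      _ = ENNReal.ofReal (ρ ^ (-l)) *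
            ∫⁻ z : Eu in B₁, W z * ENNReal.ofReal (‖z - u₁‖ ^ (-k)) :=
          lintegral_const_mul' _ _ ofReal_ne_top
      _ ≤ ENNReal.ofReal (ρ ^ (-l)) *
            (KUk * ENNReal.ofReal (ρ ^ max ((n:ℝ) - k - t) 0)) :=
          mul_le_mul_right (hUk u₁ ρ hρh) _
      _ = KUk * ENNReal.ofReal (ρ ^ x1) := by
          rw [← mul_assoc, mul_comm (ENNReal.ofReal (ρ ^ (-l))) KUk, mul_assoc,
            ← ENNReal.ofReal_mul (by positivity), ← Real.rpow_add hρ0, hx1d]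
      _ ≤ KUk * (ENNReal.ofReal (2 ^ (-x1)) * ENNReal.ofReal (d ^ (-m))) :=
          mul_le_mul_right (hpow x1 hx1) _
      _ = KUk * ENNReal.ofReal (2 ^ (-x1)) * ENNReal.ofReal (d ^ (-m)) := by ring
  have hpiece2 : ∫⁻ z : Eu in B₂, g z ≤
      KUl * ENNReal.ofReal (2 ^ (-x2)) * ENNReal.ofReal (d ^ (-m)) := by
    calc ∫⁻ z : Eu in B₂, g z
        ≤ ∫⁻ z : Eu in B₂, ENNReal.ofReal (ρ ^ (-k)) *
            (W z * ENNReal.ofReal (‖z - u₂‖ ^ (-l))) := by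
          apply setLIntegral_mono (((wce_measW s).mul (wce_measFu u₂ l)).const_mul _)
          intro z hz
          rw [hg]
          calc W z * ENNReal.ofReal (‖z - u₁‖ ^ (-k)) * ENNReal.ofReal (‖z - u₂‖ ^ (-l))
              ≤ W z * ENNReal.ofReal (ρ ^ (-k)) * ENNReal.ofReal (‖z - u₂‖ ^ (-l)) := by
                apply mul_le_mul_left
                apply mul_le_mul_right
                exact ENNReal.ofReal_le_ofReal
                  (Real.rpow_le_rpow_of_nonpos hρ0 (hb1ρ z hz) (neg_nonpos.mpr hk0))
            _ = ENNReal.ofReal (ρ ^ (-k)) * (W z * ENNReal.ofReal (‖z - u₂‖ ^ (-l))) := by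
                ring
      _ = ENNReal.ofReal (ρ ^ (-k)) *
            ∫⁻ z : Eu in B₂, W z * ENNReal.ofReal (‖z - u₂‖ ^ (-l)) :=
          lintegral_const_mul' _ _ ofReal_ne_top
      _ ≤ ENNReal.ofReal (ρ ^ (-k)) *
            (KUl * ENNReal.ofReal (ρ ^ max ((n:ℝ) - l - t) 0)) :=
          mul_le_mul_right (hUl u₂ ρ hρh) _
      _ = KUl * ENNReal.ofReal (ρ ^ x2) := by
          rw [← mul_assoc, mul_comm (ENNReal.ofReal (ρ ^ (-k))) KUl, mul_assoc,
            ← ENNReal.ofReal_mul (by positivity), ← Real.rpow_add hρ0, hx2d]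
      _ ≤ KUl * (ENNReal.ofReal (2 ^ (-x2)) * ENNReal.ofReal (d ^ (-m))) :=
          mul_le_mul_right (hpow x2 hx2) _
      _ = KUl * ENNReal.ofReal (2 ^ (-x2)) * ENNReal.ofReal (d ^ (-m)) := by ring
  have hpiece3 : ∫⁻ z : Eu in (B₁ ∪ B₂)ᶜ, g z ≤
      (KR * ENNReal.ofReal (2 ^ (-x3)) + KR * ENNReal.ofReal (2 ^ (-x3))) *
        ENNReal.ofReal (d ^ (-m)) := by
    have hmono : ∫⁻ z : Eu in (B₁ ∪ B₂)ᶜ, g z ≤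
        ∫⁻ z : Eu in (B₁ ∪ B₂)ᶜ,
          (W z * ENNReal.ofReal (‖z - u₁‖ ^ (-(k+l))) +
           W z * ENNReal.ofReal (‖z - u₂‖ ^ (-(k+l)))) := by
      apply setLIntegral_mono
        (((wce_measW s).mul (wce_measFu u₁ (k+l))).add ((wce_measW s).mul (wce_measFu u₂ (k+l))))
      intro z hz
      have ha : ρ ≤ ‖z - u₁‖ := by
        have h1 : z ∉ B₁ := fun h => hz (Or.inl h)
        rw [hB₁, mem_ball, dist_eq_norm, not_lt] at h1
        exact h1
      have hb : ρ ≤ ‖z - u₂‖ := by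
        have h1 : z ∉ B₂ := fun h => hz (Or.inr h)
        rw [hB₂, mem_ball, dist_eq_norm, not_lt] at h1
        exact h1
      have hsplit := wce_mul_split hk0 hl0 (lt_of_lt_of_le hρ0 ha) (lt_of_lt_of_le hρ0 hb)
      rw [hg]
      calc W z * ENNReal.ofReal (‖z - u₁‖ ^ (-k)) * ENNReal.ofReal (‖z - u₂‖ ^ (-l))
          = W z * ENNReal.ofReal (‖z - u₁‖ ^ (-k) * ‖z - u₂‖ ^ (-l)) := by
            rw [mul_assoc, ← ENNReal.ofReal_mul (by positivity)]
        _ ≤ W z * (ENNReal.ofReal (‖z - u₁‖ ^ (-(k+l))) + ENNReal.ofReal (‖z - u₂‖ ^ (-(k+l)))) := by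
            apply mul_le_mul_right
            calc ENNReal.ofReal (‖z - u₁‖ ^ (-k) * ‖z - u₂‖ ^ (-l))
                ≤ ENNReal.ofReal (‖z - u₁‖ ^ (-(k+l)) + ‖z - u₂‖ ^ (-(k+l))) :=
                  ENNReal.ofReal_le_ofReal hsplit
              _ = _ := ENNReal.ofReal_add (by positivity) (by positivity)
        _ = W z * ENNReal.ofReal (‖z - u₁‖ ^ (-(k+l))) +
            W z * ENNReal.ofReal (‖z - u₂‖ ^ (-(k+l))) := mul_add _ _ _
    apply le_trans hmono
    calc ∫⁻ z : Eu in (B₁ ∪ B₂)ᶜ,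
          (W z * ENNReal.ofReal (‖z - u₁‖ ^ (-(k+l))) +
           W z * ENNReal.ofReal (‖z - u₂‖ ^ (-(k+l))))
        = (∫⁻ z : Eu in (B₁ ∪ B₂)ᶜ, W z * ENNReal.ofReal (‖z - u₁‖ ^ (-(k+l)))) +
          ∫⁻ z : Eu in (B₁ ∪ B₂)ᶜ, W z * ENNReal.ofReal (‖z - u₂‖ ^ (-(k+l))) :=
          lintegral_add_left ((wce_measW s).mul (wce_measFu u₁ (k+l))) _
      _ ≤ (∫⁻ z : Eu in (ball u₁ ρ)ᶜ, W z * ENNReal.ofReal (‖z - u₁‖ ^ (-(k+l)))) +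
          ∫⁻ z : Eu in (ball u₂ ρ)ᶜ, W z * ENNReal.ofReal (‖z - u₂‖ ^ (-(k+l))) := by
          apply add_le_add <;> apply lintegral_mono_set <;>
            · apply compl_subset_compl.mpr
              first | exact subset_union_left | exact subset_union_right
      _ ≤ KR * ENNReal.ofReal (ρ ^ ((n:ℝ) - (k+l) - t)) +
          KR * ENNReal.ofReal (ρ ^ ((n:ℝ) - (k+l) - t)) :=
          add_le_add (hRR u₁ ρ hρh) (hRR u₂ ρ hρh)
      _ ≤ KR * (ENNReal.ofReal (2 ^ (-x3)) * ENNReal.ofReal (d ^ (-m))) +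
          KR * (ENNReal.ofReal (2 ^ (-x3)) * ENNReal.ofReal (d ^ (-m))) := by
          apply add_le_add <;> exact mul_le_mul_right (hx3d ▸ hpow x3 hx3) _
      _ = (KR * ENNReal.ofReal (2 ^ (-x3)) + KR * ENNReal.ofReal (2 ^ (-x3))) *
            ENNReal.ofReal (d ^ (-m)) := by ring
  have hcover : (univ : Set (EuclideanSpace ℝ (Fin n))) ⊆ B₁ ∪ (B₂ ∪ (B₁ ∪ B₂)ᶜ) := by
    intro z _
    by_cases h1 : z ∈ B₁
    · exact Or.inl h1
    by_cases h2 : z ∈ B₂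
    · exact Or.inr (Or.inl h2)
    · exact Or.inr (Or.inr (fun h => h.elim h1 h2))
  calc ∫⁻ z : Eu, g z = ∫⁻ z : Eu in univ, g z := (setLIntegral_univ _).symm
    _ ≤ ∫⁻ z : Eu in B₁ ∪ (B₂ ∪ (B₁ ∪ B₂)ᶜ), g z := lintegral_mono_set hcover
    _ ≤ (∫⁻ z : Eu in B₁, g z) + ((∫⁻ z : Eu in B₂, g z) + ∫⁻ z : Eu in (B₁ ∪ B₂)ᶜ, g z) :=
        le_trans (lintegral_union_le _ _ _) (add_le_add_right (lintegral_union_le _ _ _) _)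
    _ ≤ KUk * ENNReal.ofReal (2 ^ (-x1)) * ENNReal.ofReal (d ^ (-m)) +
        (KUl * ENNReal.ofReal (2 ^ (-x2)) * ENNReal.ofReal (d ^ (-m)) +
         (KR * ENNReal.ofReal (2 ^ (-x3)) + KR * ENNReal.ofReal (2 ^ (-x3))) *
           ENNReal.ofReal (d ^ (-m))) :=
        add_le_add hpiece1 (add_le_add hpiece2 hpiece3)
    _ = _ := by ring

lemma wce_Gfull (hn : 0 < n) {s k l : ℝ} (hs0 : 0 < s) (hk0 : 0 ≤ k) (hl0 : 0 ≤ l)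
    (hσ0 : 0 < k + l) (hσn : k + l < n) (hσs : (n:ℝ) < (k + l) + s) :
    ∃ K : ℝ≥0∞, K ≠ ∞ ∧ ∀ u₁ u₂ : EuclideanSpace ℝ (Fin n),
      ∫⁻ z : Eu, ENNReal.ofReal (Real.sqrt (1 + ‖z‖ ^ 2) ^ (-s)) *
          ENNReal.ofReal (‖z - u₁‖ ^ (-k)) * ENNReal.ofReal (‖z - u₂‖ ^ (-l))
        ≤ K := by
  haveI := eu_nontrivial hn
  obtain ⟨KG, hKG, hG⟩ := wce_G hn hs0 hσ0 hσn hσs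
  refine ⟨KG + KG, ENNReal.add_ne_top.mpr ⟨hKG, hKG⟩, fun u₁ u₂ => ?_⟩
  set W : Eu → ℝ≥0∞ := fun z => ENNReal.ofReal (Real.sqrt (1 + ‖z‖ ^ 2) ^ (-s)) with hW
  have hae : ∀ᵐ z : Eu ∂volume, z ≠ u₁ ∧ z ≠ u₂ := by
    have h1 : ∀ᵐ z : Eu ∂volume, z ≠ u₁ := ae_iff.mpr (by simpa using measure_singleton u₁)
    have h2 : ∀ᵐ z : Eu ∂volume, z ≠ u₂ := ae_iff.mpr (by simpa using measure_singleton u₂)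
    filter_upwards [h1, h2] with z hz1 hz2
    exact ⟨hz1, hz2⟩
  have hmono : ∫⁻ z : Eu, W z * ENNReal.ofReal (‖z - u₁‖ ^ (-k)) *
        ENNReal.ofReal (‖z - u₂‖ ^ (-l)) ≤
      ∫⁻ z : Eu, (W z * ENNReal.ofReal (‖z - u₁‖ ^ (-(k+l))) +
        W z * ENNReal.ofReal (‖z - u₂‖ ^ (-(k+l)))) := by
    apply lintegral_mono_ae
    filter_upwards [hae] with z hz
    have ha : (0:ℝ) < ‖z - u₁‖ := norm_pos_iff.mpr (sub_ne_zero.mpr hz.1)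
    have hb : (0:ℝ) < ‖z - u₂‖ := norm_pos_iff.mpr (sub_ne_zero.mpr hz.2)
    have hsplit := wce_mul_split hk0 hl0 ha hb
    calc W z * ENNReal.ofReal (‖z - u₁‖ ^ (-k)) * ENNReal.ofReal (‖z - u₂‖ ^ (-l))
        = W z * ENNReal.ofReal (‖z - u₁‖ ^ (-k) * ‖z - u₂‖ ^ (-l)) := by
          rw [mul_assoc, ← ENNReal.ofReal_mul (by positivity)]
      _ ≤ W z * (ENNReal.ofReal (‖z - u₁‖ ^ (-(k+l))) + ENNReal.ofReal (‖z - u₂‖ ^ (-(k+l)))) := by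
          apply mul_le_mul_right
          calc ENNReal.ofReal (‖z - u₁‖ ^ (-k) * ‖z - u₂‖ ^ (-l))
              ≤ ENNReal.ofReal (‖z - u₁‖ ^ (-(k+l)) + ‖z - u₂‖ ^ (-(k+l))) :=
                ENNReal.ofReal_le_ofReal hsplit
            _ = _ := ENNReal.ofReal_add (by positivity) (by positivity)
      _ = W z * ENNReal.ofReal (‖z - u₁‖ ^ (-(k+l))) +
          W z * ENNReal.ofReal (‖z - u₂‖ ^ (-(k+l))) := mul_add _ _ _
  apply le_trans hmono
  calc ∫⁻ z : Eu, (W z * ENNReal.ofReal (‖z - u₁‖ ^ (-(k+l))) +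
        W z * ENNReal.ofReal (‖z - u₂‖ ^ (-(k+l))))
      = (∫⁻ z : Eu, W z * ENNReal.ofReal (‖z - u₁‖ ^ (-(k+l)))) +
        ∫⁻ z : Eu, W z * ENNReal.ofReal (‖z - u₂‖ ^ (-(k+l))) :=
        lintegral_add_left ((wce_measW s).mul (wce_measFu u₁ (k+l))) _
    _ ≤ KG + KG := add_le_add (hG u₁) (hG u₂)

set_option maxHeartbeats 1000000 in
theorem weighted_convolution_estimate
    (n : ℕ) (hn : 0 < n) (k ℓ β ε : ℝ)
    (hk0 : 0 ≤ k) (hkn : k < n) (hl0 : 0 ≤ ℓ) (hln : ℓ < n)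
    (hβ : 0 < β) (hsum : (n : ℝ) ≤ k + ℓ + β) (hne : k + ℓ ≠ n)
    (hε : 0 < ε) :
    ∃ C : ℝ, ∀ u₁ u₂ : EuclideanSpace ℝ (Fin n),
      (‖u₁ - u₂‖ ≤ 1 →
        (∫ z : EuclideanSpace ℝ (Fin n),
            Real.sqrt (1 + ‖z‖ ^ 2) ^ (-β - ε) / (‖z - u₁‖ ^ k * ‖z - u₂‖ ^ ℓ)) ≤
          C * (‖u₁ - u₂‖⁻¹) ^ (max 0 (k + ℓ - n))) ∧
      (1 < ‖u₁ - u₂‖ →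
        (∫ z : EuclideanSpace ℝ (Fin n),
            Real.sqrt (1 + ‖z‖ ^ 2) ^ (-β - ε) / (‖z - u₁‖ ^ k * ‖z - u₂‖ ^ ℓ)) ≤
          C * (‖u₁ - u₂‖⁻¹) ^ (min k (min ℓ (k + ℓ + β - n)))) := by
  haveI := eu_nontrivial hn
  have hs0 : (0:ℝ) < β + ε := by linarith
  have h0n : (0:ℝ) < n := by exact_mod_cast hn
  have hexp : (-β - ε : ℝ) = -(β + ε) := by ring
  have hInt : ∀ u₁ u₂ : EuclideanSpace ℝ (Fin n),
      (∫ z : EuclideanSpace ℝ (Fin n),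
          Real.sqrt (1 + ‖z‖ ^ 2) ^ (-β - ε) / (‖z - u₁‖ ^ k * ‖z - u₂‖ ^ ℓ))
        = (∫⁻ z : EuclideanSpace ℝ (Fin n), ENNReal.ofReal (Real.sqrt (1 + ‖z‖ ^ 2) ^ (-(β+ε)))
            * ENNReal.ofReal (‖z - u₁‖ ^ (-k)) * ENNReal.ofReal (‖z - u₂‖ ^ (-ℓ))).toReal := by
    intro u₁ u₂
    have hmeas : Measurable fun z : EuclideanSpace ℝ (Fin n) =>
        Real.sqrt (1 + ‖z‖ ^ 2) ^ (-β - ε) / (‖z - u₁‖ ^ k * ‖z - u₂‖ ^ ℓ) := by fun_prop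
    rw [integral_eq_lintegral_of_nonneg_ae (ae_of_all _ (fun z => by positivity))
      hmeas.aestronglyMeasurable]
    congr 1
    apply lintegral_congr
    intro z
    rw [hexp]
    exact wce_F_eq (β+ε) k ℓ u₁ u₂ z
  by_cases hσz : k + ℓ = 0
  · -- degenerate case k = ℓ = 0
    have hk : k = 0 := by linarith
    have hl : ℓ = 0 := by linarith
    subst hk; subst hl
    refine ⟨(∫⁻ z : EuclideanSpace ℝ (Fin n), ENNReal.ofReal (Real.sqrt (1 + ‖z‖ ^ 2) ^ (-(β+ε)))).toReal,
      fun u₁ u₂ => ⟨?_, ?_⟩⟩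
    · intro _
      have h1 : max (0:ℝ) (0 + 0 - (n:ℝ)) = 0 := max_eq_left (by linarith)
      rw [h1, Real.rpow_zero, mul_one, hInt u₁ u₂]
      apply le_of_eq
      congr 1
      apply lintegral_congr
      intro z
      simp [Real.rpow_zero, neg_zero]
    · intro _
      have h2 : min (0:ℝ) (min 0 (0 + 0 + β - (n:ℝ))) = 0 := by
        rw [min_eq_left (by linarith : (0:ℝ) ≤ 0 + 0 + β - (n:ℝ)), min_self]
      rw [h2, Real.rpow_zero, mul_one, hInt u₁ u₂]
      apply le_of_eq
      congr 1
      apply lintegral_congr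
      intro z
      simp [Real.rpow_zero, neg_zero]
  · -- main case : k + ℓ > 0
    have hσpos : 0 < k + ℓ := lt_of_le_of_ne (by linarith) (Ne.symm hσz)
    have hσs : (n:ℝ) < (k + ℓ) + (β + ε) := by linarith
    set m : ℝ := min k (min ℓ (k + ℓ + β - n)) with hm
    have hm_k : m ≤ k := min_le_left _ _
    have hm_l : m ≤ ℓ := le_trans (min_le_right _ _) (min_le_left _ _)
    have hm_σβ : m ≤ k + ℓ + β - n := le_trans (min_le_right _ _) (min_le_right _ _)
    have hm0 : 0 ≤ m := le_min hk0 (le_min hl0 (by linarith))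
    have hBprov : ∃ K : ℝ≥0∞, K ≠ ∞ ∧ ∀ u₁ u₂ : EuclideanSpace ℝ (Fin n),
        1 < ‖u₁ - u₂‖ →
        ∫⁻ z : EuclideanSpace ℝ (Fin n), ENNReal.ofReal (Real.sqrt (1 + ‖z‖ ^ 2) ^ (-(β+ε)))
            * ENNReal.ofReal (‖z - u₁‖ ^ (-k)) * ENNReal.ofReal (‖z - u₂‖ ^ (-ℓ))
          ≤ K * ENNReal.ofReal (‖u₁ - u₂‖ ^ (-m)) := by
      rcases eq_or_lt_of_le hm0 with hm00 | hmpos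
      · -- m = 0 forces k + ℓ < n ; use the global bound
        have hσltn : k + ℓ < n := by
          by_contra hge
          push_neg at hge
          have hgt : (n:ℝ) < k + ℓ := lt_of_le_of_ne hge (Ne.symm hne)
          have hkp : 0 < k := by
            rcases eq_or_lt_of_le hk0 with h | h
            · exfalso; rw [← h] at hgt; simp at hgt; linarith
            · exact h
          have hlp : 0 < ℓ := by
            rcases eq_or_lt_of_le hl0 with h | h
            · exfalso; rw [← h] at hgt; simp at hgt; linarith
            · exact h
          have : 0 < m := lt_min hkp (lt_min hlp (by linarith))
          linarith
        obtain ⟨KG, hKG, hGf⟩ := wce_Gfull hn hs0 hk0 hl0 hσpos hσltn hσs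
        refine ⟨KG, hKG, fun u₁ u₂ _ => ?_⟩
        calc _ ≤ KG := hGf u₁ u₂
          _ = KG * ENNReal.ofReal (‖u₁ - u₂‖ ^ (-m)) := by
              rw [← hm00, neg_zero, Real.rpow_zero, ENNReal.ofReal_one, mul_one]
      · -- m > 0 : splitting with a good auxiliary exponent t
        have hkp : 0 < k := lt_of_lt_of_le hmpos hm_k
        have hlp : 0 < ℓ := lt_of_lt_of_le hmpos hm_l
        have hlohi : max (m + n - (k + ℓ)) 0 < min (β + ε) (n:ℝ) := by
          rw [max_lt_iff, lt_min_iff, lt_min_iff]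
          refine ⟨⟨by linarith, by linarith⟩, ⟨hs0, h0n⟩⟩
        obtain ⟨t, hlt, hth, htk, htl⟩ :=
          wce_pick_t (a1 := (n:ℝ) - k) (a2 := (n:ℝ) - ℓ) hlohi
        have hlt' : m + n - (k + ℓ) < t := lt_of_le_of_lt (le_max_left _ _) hlt
        have ht0 : 0 ≤ t := le_of_lt (lt_of_le_of_lt (le_max_right _ _) hlt)
        have hts : t ≤ β + ε := le_of_lt (lt_of_lt_of_le hth (min_le_left _ _))
        have htn : t < n := lt_of_lt_of_le hth (min_le_right _ _)
        have htk' : t + k ≠ (n:ℝ) := fun h => htk (by linarith)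
        have htl' : t + ℓ ≠ (n:ℝ) := fun h => htl (by linarith)
        have hσt : (n:ℝ) < (k + ℓ) + t := by linarith
        have hx1 : -ℓ + max ((n:ℝ) - k - t) 0 ≤ -m := by
          have h1 : max ((n:ℝ) - k - t) 0 ≤ ℓ - m := max_le (by linarith) (by linarith)
          linarith
        have hx2 : -k + max ((n:ℝ) - ℓ - t) 0 ≤ -m := by
          have h1 : max ((n:ℝ) - ℓ - t) 0 ≤ k - m := max_le (by linarith) (by linarith)
          linarith
        have hx3 : (n:ℝ) - (k + ℓ) - t ≤ -m := by linarith
        exact wce_B hn hs0 hk0 hkn hl0 hln ht0 hts htn htk' htl' hσt hx1 hx2 hx3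
    obtain ⟨KB, hKB, hBf⟩ := hBprov
    have goal2 : ∀ u₁ u₂ : EuclideanSpace ℝ (Fin n), 1 < ‖u₁ - u₂‖ →
        (∫ z : EuclideanSpace ℝ (Fin n),
            Real.sqrt (1 + ‖z‖ ^ 2) ^ (-β - ε) / (‖z - u₁‖ ^ k * ‖z - u₂‖ ^ ℓ)) ≤
          KB.toReal * (‖u₁ - u₂‖⁻¹) ^ m := by
      intro u₁ u₂ hd
      rw [hInt u₁ u₂]
      have hrw : (‖u₁ - u₂‖⁻¹) ^ m = ‖u₁ - u₂‖ ^ (-m) := by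
        rw [Real.inv_rpow (norm_nonneg _), ← Real.rpow_neg (norm_nonneg _)]
      rw [hrw]
      calc (∫⁻ z : EuclideanSpace ℝ (Fin n), ENNReal.ofReal (Real.sqrt (1 + ‖z‖ ^ 2) ^ (-(β+ε)))
            * ENNReal.ofReal (‖z - u₁‖ ^ (-k)) * ENNReal.ofReal (‖z - u₂‖ ^ (-ℓ))).toReal
          ≤ (KB * ENNReal.ofReal (‖u₁ - u₂‖ ^ (-m))).toReal :=
            ENNReal.toReal_mono (ENNReal.mul_ne_top hKB ofReal_ne_top) (hBf u₁ u₂ hd)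
        _ = KB.toReal * ‖u₁ - u₂‖ ^ (-m) := by
            rw [ENNReal.toReal_mul, ENNReal.toReal_ofReal (by positivity)]
    rcases hne.lt_or_gt with hσltn | hσgtn
    · -- k + ℓ < n
      obtain ⟨KG, hKG, hGf⟩ := wce_Gfull hn hs0 hk0 hl0 hσpos hσltn hσs
      refine ⟨max KG.toReal KB.toReal, fun u₁ u₂ => ⟨?_, ?_⟩⟩
      · intro _
        rw [hInt u₁ u₂, max_eq_left (by linarith : k + ℓ - (n:ℝ) ≤ 0),
          Real.rpow_zero, mul_one]
        calc _ ≤ KG.toReal := ENNReal.toReal_mono hKG (hGf u₁ u₂)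
          _ ≤ max KG.toReal KB.toReal := le_max_left _ _
      · intro hd
        calc _ ≤ KB.toReal * (‖u₁ - u₂‖⁻¹) ^ m := goal2 u₁ u₂ hd
          _ ≤ max KG.toReal KB.toReal * (‖u₁ - u₂‖⁻¹) ^ m :=
              mul_le_mul_of_nonneg_right (le_max_right _ _) (by positivity)
    · -- n < k + ℓ
      obtain ⟨KA, hKA, hAf⟩ := wce_A2 hn hs0 hk0 hkn hl0 hln hσgtn
      refine ⟨max KA.toReal KB.toReal, fun u₁ u₂ => ⟨?_, ?_⟩⟩
      · intro _
        rcases eq_or_lt_of_le (norm_nonneg (u₁ - u₂)) with hd0 | hd0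
        · -- u₁ = u₂ : the integral diverges and both sides are zero
          have hu : u₁ = u₂ := by
            have h1 : ‖u₁ - u₂‖ = 0 := hd0.symm
            rwa [norm_eq_zero, sub_eq_zero] at h1
          subst hu
          have htop : (∫⁻ z : EuclideanSpace ℝ (Fin n), ENNReal.ofReal (Real.sqrt (1 + ‖z‖ ^ 2) ^ (-(β+ε)))
              * ENNReal.ofReal (‖z - u₁‖ ^ (-k)) * ENNReal.ofReal (‖z - u₁‖ ^ (-ℓ))) = ∞ := by
            have h1 := wce_INF hn hs0.le hσgtn hk0 hl0 rfl u₁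
            rw [← h1]
            apply lintegral_congr
            intro z
            exact (wce_F_eq (β+ε) k ℓ u₁ u₁ z).symm
          rw [hInt u₁ u₁, htop, ENNReal.toReal_top]
          have h1 : (0:ℝ) ≤ max KA.toReal KB.toReal :=
            le_trans ENNReal.toReal_nonneg (le_max_left _ _)
          exact mul_nonneg h1 (Real.rpow_nonneg (by positivity) _)
        · rw [hInt u₁ u₂]
          have hrw : (‖u₁ - u₂‖⁻¹) ^ (max 0 (k + ℓ - (n:ℝ))) =
              ‖u₁ - u₂‖ ^ ((n:ℝ) - (k + ℓ)) := by
            rw [max_eq_right (by linarith : (0:ℝ) ≤ k + ℓ - n),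
              Real.inv_rpow (norm_nonneg _), ← Real.rpow_neg (norm_nonneg _),
              show -(k + ℓ - (n:ℝ)) = (n:ℝ) - (k + ℓ) by ring]
          rw [hrw]
          calc (∫⁻ z : EuclideanSpace ℝ (Fin n), ENNReal.ofReal (Real.sqrt (1 + ‖z‖ ^ 2) ^ (-(β+ε)))
                * ENNReal.ofReal (‖z - u₁‖ ^ (-k)) * ENNReal.ofReal (‖z - u₂‖ ^ (-ℓ))).toReal
              ≤ (KA * ENNReal.ofReal (‖u₁ - u₂‖ ^ ((n:ℝ) - (k + ℓ)))).toReal :=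
                ENNReal.toReal_mono (ENNReal.mul_ne_top hKA ofReal_ne_top) (hAf u₁ u₂ hd0)
            _ = KA.toReal * ‖u₁ - u₂‖ ^ ((n:ℝ) - (k + ℓ)) := by
                rw [ENNReal.toReal_mul, ENNReal.toReal_ofReal (by positivity)]
            _ ≤ max KA.toReal KB.toReal * ‖u₁ - u₂‖ ^ ((n:ℝ) - (k + ℓ)) :=
                mul_le_mul_of_nonneg_right (le_max_left _ _) (by positivity)
      · intro hd
        calc _ ≤ KB.toReal * (‖u₁ - u₂‖⁻¹) ^ m := goal2 u₁ u₂ hd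
          _ ≤ max KA.toReal KB.toReal * (‖u₁ - u₂‖⁻¹) ^ m :=
              mul_le_mul_of_nonneg_right (le_max_right _ _) (by positivity)
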